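/- arXiv:1507.08418 — 4 statements merged into one kernel-verified Lean document; each statement's English description precedes it below -/
import Mathlib

section
/- Let A and B be symmetric linear operators in a real or complex Hilbert space H with dom A ⊆ dom B. Assume that A is selfadjoint, that A is (A+B)-bounded, and that there exists b > 0 such that ‖B x‖² ≤ ‖A x‖² + ‖(A+B) x‖² + b²‖x‖² for all x ∈ dom A. Then A + B (with domain dom A) is selfadjoint. -/
open LinearPMap

/-- A partially defined operator `A` in a Hilbert space is symmetric if
`⟪A x, y⟫ = ⟪x, A y⟫` for all `x, y` in its domain. -/
def LinearPMap.IsSymmetricOp {𝕜 H : Type*} [RCLike 𝕜] [NormedAddCommGroup H]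
    [InnerProductSpace 𝕜 H] (A : H →ₗ.[𝕜] H) : Prop :=
  ∀ x y : A.domain, inner (𝕜 := 𝕜) (A x) (y : H) = inner (𝕜 := 𝕜) (x : H) (A y)

/-- A partially defined operator `A` in a Hilbert space is selfadjoint if it is densely
defined and `A* = A`. -/
def LinearPMap.IsSelfAdjointOp {𝕜 H : Type*} [RCLike 𝕜] [NormedAddCommGroup H]
    [InnerProductSpace 𝕜 H] [CompleteSpace H] (A : H →ₗ.[𝕜] H) : Prop :=
  Dense (A.domain : Set H) ∧ A.adjoint = A

/-- An operator `A` in a Hilbert space is essentially selfadjoint if it is closable and its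
closure is a densely defined selfadjoint operator. -/
def LinearPMap.IsEssSelfAdjointOp {𝕜 H : Type*} [RCLike 𝕜] [NormedAddCommGroup H]
    [InnerProductSpace 𝕜 H] [CompleteSpace H] (A : H →ₗ.[𝕜] H) : Prop :=
  A.IsClosable ∧ Dense (A.closure.domain : Set H) ∧ A.closure.adjoint = A.closure


set_option linter.unusedSectionVars false
set_option maxHeartbeats 1000000

open RCLike Submodule

section AuxSA

variable {𝕜 H : Type*} [RCLike 𝕜] [NormedAddCommGroup H] [InnerProductSpace 𝕜 H]
  [CompleteSpace H]

local notation "⟪" x ", " y "⟫" => @inner 𝕜 _ _ x y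

/-- pack a pair into the L² product. -/
noncomputable def mkK (a b : H) : WithLp 2 (H × H) :=
  (WithLp.equiv 2 (H × H)).symm (a, b)

@[simp] lemma mkK_fst (a b : H) : (mkK a b).fst = a := rfl
@[simp] lemma mkK_snd (a b : H) : (mkK a b).snd = b := rfl
lemma mkK_eta (p : WithLp 2 (H × H)) : mkK p.fst p.snd = p := rfl
lemma mkK_add (a b c d : H) : mkK a b + mkK c d = mkK (a + c) (b + d) := rfl
lemma mkK_smul (r : 𝕜) (a b : H) : r • mkK a b = mkK (r • a) (r • b) := rfl
@[simp] lemma mkK_zero : (mkK 0 0 : WithLp 2 (H × H)) = 0 := rfl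

lemma inner_mkK (a b c d : H) : ⟪(mkK a b : WithLp 2 (H × H)), mkK c d⟫ = ⟪a, c⟫ + ⟪b, d⟫ := rfl

/-- The graph of `c • S` as a submodule of the L² product. -/
noncomputable def grOp (c : 𝕜) (S : H →ₗ.[𝕜] H) : Submodule 𝕜 (WithLp 2 (H × H)) where
  carrier := {p | ∃ x : S.domain, mkK (x : H) (c • S x) = p}
  zero_mem' := ⟨0, by simp⟩
  add_mem' := by
    rintro p q ⟨x, rfl⟩ ⟨y, rfl⟩
    exact ⟨x + y, by rw [mkK_add]; congr 1 <;> simp [LinearPMap.map_add, smul_add]⟩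
  smul_mem' := by
    rintro r p ⟨x, rfl⟩
    refine ⟨r • x, ?_⟩
    rw [mkK_smul, LinearPMap.map_smul, smul_comm c r]
    rfl

/-- The rotated graph of `c • S`. -/
noncomputable def vgrOp (c : 𝕜) (S : H →ₗ.[𝕜] H) : Submodule 𝕜 (WithLp 2 (H × H)) where
  carrier := {p | ∃ x : S.domain, mkK (-(c • S x)) (x : H) = p}
  zero_mem' := ⟨0, by simp⟩
  add_mem' := by
    rintro p q ⟨x, rfl⟩ ⟨y, rfl⟩
    refine ⟨x + y, ?_⟩
    rw [mkK_add]; congr 1 <;> simp [LinearPMap.map_add, smul_add]; abel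
  smul_mem' := by
    rintro r p ⟨x, rfl⟩
    refine ⟨r • x, ?_⟩
    rw [mkK_smul, LinearPMap.map_smul, smul_comm c r, ← smul_neg]
    rfl

lemma mem_grOp {c : 𝕜} {S : H →ₗ.[𝕜] H} {p : WithLp 2 (H × H)} :
    p ∈ grOp c S ↔ ∃ x : S.domain, mkK (x : H) (c • S x) = p := Iff.rfl

lemma mem_vgrOp {c : 𝕜} {S : H →ₗ.[𝕜] H} {p : WithLp 2 (H × H)} :
    p ∈ vgrOp c S ↔ ∃ x : S.domain, mkK (-(c • S x)) (x : H) = p := Iff.rfl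


/-- From the defining property of the adjoint and selfadjointness, recover graph membership. -/
lemma mem_of_selfadj {A : H →ₗ.[𝕜] H} (hA2 : A.adjoint = A) (hAd : Dense (A.domain : Set H))
    {u w : H} (h : ∀ x : A.domain, ⟪w, (x : H)⟫ = ⟪u, A x⟫) :
    ∃ hu : u ∈ A.domain, A ⟨u, hu⟩ = w := by
  have hu' : u ∈ A.adjoint.domain := LinearPMap.mem_adjoint_domain_of_exists _ ⟨w, h⟩
  have happ : A.adjoint ⟨u, hu'⟩ = w := LinearPMap.adjoint_apply_eq hAd _ h
  obtain ⟨hdom, hval⟩ := LinearPMap.ext_iff.mp hA2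
  refine ⟨hdom ▸ hu', ?_⟩
  rw [← happ]
  exact (hval (x := u) (hf := hu') (hg := hdom ▸ hu')).symm

variable {A : H →ₗ.[𝕜] H}

/-- The orthogonal complement of the rotated graph of `εA` is the graph of `εA`. -/
lemma orth_vgrOp (hAsymm : A.IsSymmetricOp) (hA2 : A.adjoint = A)
    (hAd : Dense (A.domain : Set H)) {ε : ℝ} (hε : ε ≠ 0) :
    (vgrOp ((ε : 𝕜)) A)ᗮ = grOp ((ε : 𝕜)) A := by
  have hcne : ((ε : 𝕜)) ≠ 0 := by exact_mod_cast RCLike.ofReal_ne_zero.mpr hε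
  ext p
  rw [Submodule.mem_orthogonal]
  constructor
  · intro hp
    have key : ∀ z : A.domain, ⟪((ε : 𝕜))⁻¹ • p.snd, (z : H)⟫ = ⟪p.fst, A z⟫ := by
      intro z
      have h0 := hp _ (mem_vgrOp.mpr ⟨z, rfl⟩)
      rw [← mkK_eta p, inner_mkK] at h0
      have h1 : ⟪-((ε : 𝕜) • A z), p.fst⟫ = -((ε:𝕜) * ⟪A z, p.fst⟫) := by
        rw [inner_neg_left, inner_smul_left, RCLike.conj_ofReal]
      have h2 : (ε:𝕜) * ⟪A z, p.fst⟫ = ⟪(z : H), p.snd⟫ := by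
        rw [h1] at h0
        linear_combination -h0
      have h3 : ⟪A z, p.fst⟫ = ((ε : 𝕜))⁻¹ * ⟪(z : H), p.snd⟫ := by
        field_simp
        linear_combination h2
      have h4 : ⟪p.fst, A z⟫ = ((ε : 𝕜))⁻¹ * ⟪p.snd, (z : H)⟫ := by
        have h5 := congrArg (starRingEnd 𝕜) h3
        simpa [map_mul, RCLike.conj_inv, RCLike.conj_ofReal] using h5
      rw [inner_smul_left, RCLike.conj_inv, RCLike.conj_ofReal, h4]
    obtain ⟨hu, hw⟩ := mem_of_selfadj hA2 hAd key
    refine mem_grOp.mpr ⟨⟨p.fst, hu⟩, ?_⟩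
    rw [hw]
    have : (ε : 𝕜) • ((ε : 𝕜))⁻¹ • p.snd = p.snd := by
      rw [smul_smul, mul_inv_cancel₀ hcne, one_smul]
    rw [this]
    exact mkK_eta p
  · rintro ⟨x, rfl⟩
    rintro q hq
    obtain ⟨z, rfl⟩ := mem_vgrOp.mp hq
    rw [inner_mkK, inner_neg_left, inner_smul_left, inner_smul_right, RCLike.conj_ofReal]
    rw [hAsymm z x]
    ring

/-- The orthogonal complement of the graph of `εA` is the rotated graph of `εA`. -/
lemma orth_grOp (hAsymm : A.IsSymmetricOp) (hA2 : A.adjoint = A)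
    (hAd : Dense (A.domain : Set H)) {ε : ℝ} (hε : ε ≠ 0) :
    (grOp ((ε : 𝕜)) A)ᗮ = vgrOp ((ε : 𝕜)) A := by
  have hcne : ((ε : 𝕜)) ≠ 0 := by exact_mod_cast RCLike.ofReal_ne_zero.mpr hε
  ext p
  rw [Submodule.mem_orthogonal]
  constructor
  · intro hp
    have key : ∀ z : A.domain, ⟪-((ε : 𝕜))⁻¹ • p.fst, (z : H)⟫ = ⟪p.snd, A z⟫ := by
      intro z
      have h0 := hp _ (mem_grOp.mpr ⟨z, rfl⟩)
      rw [← mkK_eta p, inner_mkK] at h0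
      have h2 : (ε:𝕜) * ⟪A z, p.snd⟫ = -⟪(z : H), p.fst⟫ := by
        rw [inner_smul_left, RCLike.conj_ofReal] at h0
        linear_combination h0
      have h3 : ⟪A z, p.snd⟫ = -((ε : 𝕜))⁻¹ * ⟪(z : H), p.fst⟫ := by
        field_simp
        linear_combination h2
      have h4 : ⟪p.snd, A z⟫ = -((ε : 𝕜))⁻¹ * ⟪p.fst, (z : H)⟫ := by
        have h5 := congrArg (starRingEnd 𝕜) h3
        simpa [map_mul, RCLike.conj_inv, RCLike.conj_ofReal] using h5
      rw [inner_smul_left, _root_.map_neg, RCLike.conj_inv, RCLike.conj_ofReal, h4]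
    obtain ⟨hu, hw⟩ := mem_of_selfadj hA2 hAd key
    refine mem_vgrOp.mpr ⟨⟨p.snd, hu⟩, ?_⟩
    rw [hw]
    have : -((ε : 𝕜) • -((ε : 𝕜))⁻¹ • p.fst) = p.fst := by
      rw [smul_smul, mul_neg, mul_inv_cancel₀ hcne, neg_smul, one_smul, neg_neg]
    rw [this]
    exact mkK_eta p
  · rintro ⟨x, rfl⟩
    rintro q hq
    obtain ⟨z, rfl⟩ := mem_grOp.mp hq
    rw [inner_mkK, inner_neg_right, inner_smul_left, inner_smul_right, RCLike.conj_ofReal]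
    rw [hAsymm z x]
    ring


lemma grOp_closed (hAsymm : A.IsSymmetricOp) (hA2 : A.adjoint = A)
    (hAd : Dense (A.domain : Set H)) {ε : ℝ} (hε : ε ≠ 0) :
    IsClosed ((grOp ((ε : 𝕜)) A : Submodule 𝕜 (WithLp 2 (H × H))) : Set (WithLp 2 (H × H))) := by
  rw [← orth_vgrOp hAsymm hA2 hAd hε]
  exact Submodule.isClosed_orthogonal _

/-- The basic decomposition coming from selfadjointness of `A`:
every pair `(w₁, w₂)` can be written as `(x - εAz, z + εAx)`. -/
lemma decompose_selfadj (hAsymm : A.IsSymmetricOp) (hA2 : A.adjoint = A)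
    (hAd : Dense (A.domain : Set H)) {ε : ℝ} (hε : ε ≠ 0) (w : WithLp 2 (H × H)) :
    ∃ x z : A.domain, w.fst = (x : H) - (ε : 𝕜) • A z ∧ w.snd = (z : H) + (ε : 𝕜) • A x := by
  haveI : CompleteSpace (grOp ((ε : 𝕜)) A) := (grOp_closed hAsymm hA2 hAd hε).completeSpace_coe
  obtain ⟨g, hg, h, hh, hw⟩ :=
    Submodule.exists_add_mem_mem_orthogonal (K := grOp ((ε : 𝕜)) A) w
  rw [orth_grOp hAsymm hA2 hAd hε] at hh
  obtain ⟨x, rfl⟩ := mem_grOp.mp hg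
  obtain ⟨z, rfl⟩ := mem_vgrOp.mp hh
  rw [mkK_add] at hw
  refine ⟨x, z, ?_, ?_⟩
  · have h1 : w.fst = (x : H) + -((ε : 𝕜) • A z) :=
      congrArg (fun r : WithLp 2 (H × H) => r.fst) hw
    rw [h1, sub_eq_add_neg]
  · have h2 : w.snd = (ε : 𝕜) • A x + (z : H) :=
      congrArg (fun r : WithLp 2 (H × H) => r.snd) hw
    rw [h2, add_comm]

end AuxSA


section Main

open Filter Topology

variable {𝕜 H : Type*} [RCLike 𝕜] [NormedAddCommGroup H] [InnerProductSpace 𝕜 H]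
  [CompleteSpace H]

local notation "⟪" x ", " y "⟫" => @inner 𝕜 _ _ x y

theorem selfadjoint_add' (A B : H →ₗ.[𝕜] H) (hAsymm : A.IsSymmetricOp) (hBsymm : B.IsSymmetricOp)
    (hsub : A.domain ≤ B.domain)
    (hA : A.IsSelfAdjointOp)
    (hbdd : ∃ α β : ℝ, 0 ≤ α ∧ 0 ≤ β ∧ ∀ x : (A + B).domain,
      ‖A ⟨x.1, (Submodule.mem_inf.mp x.2).1⟩‖ ^ 2 ≤
        α * ‖(A + B) x‖ ^ 2 + β * ‖(x : H)‖ ^ 2)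
    (hb : ∃ b : ℝ, 0 < b ∧ ∀ x : A.domain,
      ‖B ⟨x.1, hsub x.2⟩‖ ^ 2 ≤ ‖A x‖ ^ 2 +
        ‖(A + B) ⟨x.1, Submodule.mem_inf.mpr ⟨x.2, hsub x.2⟩⟩‖ ^ 2 + b ^ 2 * ‖(x : H)‖ ^ 2) :
    (A + B).IsSelfAdjointOp := by
  obtain ⟨α, β, hα, hβ, hbdd⟩ := hbdd
  obtain ⟨b, hb0, hb⟩ := hb
  -- domain and density
  have hdense : Dense (((A + B).domain : Submodule 𝕜 H) : Set H) := by
    have h1 : (A + B).domain = A.domain ⊓ B.domain := rfl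
    rw [h1, inf_eq_left.mpr hsub]
    exact hA.1
  -- application formula
  have happ : ∀ x : (A + B).domain, (A + B) x = A ⟨x.1, x.2.1⟩ + B ⟨x.1, x.2.2⟩ :=
    fun x => LinearPMap.add_apply A B x
  -- symmetry of the sum
  have hsymT : ∀ x y : (A + B).domain, ⟪(A + B) x, (y : H)⟫ = ⟪(x : H), (A + B) y⟫ := by
    intro x y
    rw [happ x, happ y, inner_add_left, inner_add_right]
    have h1 : ⟪A ⟨x.1, x.2.1⟩, (y : H)⟫ = ⟪(x : H), A ⟨y.1, y.2.1⟩⟫ :=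
      hAsymm ⟨x.1, x.2.1⟩ ⟨y.1, y.2.1⟩
    have h2 : ⟪B ⟨x.1, x.2.2⟩, (y : H)⟫ = ⟪(x : H), B ⟨y.1, y.2.2⟩⟫ :=
      hBsymm ⟨x.1, x.2.2⟩ ⟨y.1, y.2.2⟩
    rw [h1, h2]
  have hformal : (A + B).IsFormalAdjoint (A + B) := fun x y => hsymT x y
  have hle : (A + B) ≤ (A + B).adjoint := hformal.le_adjoint hdense
  -- the numerical inequality from `hb`
  have hbre : ∀ x : A.domain,
      -(RCLike.re ⟪(A + B) ⟨x.1, Submodule.mem_inf.mpr ⟨x.2, hsub x.2⟩⟩, A x⟫) ≤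
        b ^ 2 / 2 * ‖(x : H)‖ ^ 2 := by
    intro x
    have h1 := hb x
    have h2 : B ⟨x.1, hsub x.2⟩ =
        (A + B) ⟨x.1, Submodule.mem_inf.mpr ⟨x.2, hsub x.2⟩⟩ - A x := by
      have h3 : (A + B) ⟨x.1, Submodule.mem_inf.mpr ⟨x.2, hsub x.2⟩⟩ =
          A x + B ⟨x.1, hsub x.2⟩ := happ _
      rw [h3]
      abel
    rw [h2, @norm_sub_sq 𝕜] at h1
    nlinarith [norm_nonneg ((x : H)), sq_nonneg (‖A x‖)]
  -- closedness of the graph of `A + B`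
  have hGA := grOp_closed (A := A) hAsymm hA.2 hA.1 (ε := 1) one_ne_zero
  simp only [RCLike.ofReal_one] at hGA
  have hGT : IsClosed ((grOp (1 : 𝕜) (A + B) : Submodule 𝕜 (WithLp 2 (H × H))) :
      Set (WithLp 2 (H × H))) := by
    rw [← isSeqClosed_iff_isClosed]
    intro pn q hmem hq
    choose xn hxn using fun n => mem_grOp.mp (hmem n)
    have hx1 : ∀ n, ((xn n : H)) = (pn n).fst := fun n =>
      congrArg (fun r : WithLp 2 (H × H) => r.fst) (hxn n)
    have hx2 : ∀ n, (A + B) (xn n) = (pn n).snd := by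
      intro n
      have := congrArg (fun r : WithLp 2 (H × H) => r.snd) (hxn n)
      simpa [one_smul] using this
    have hcf : Continuous (fun p : WithLp 2 (H × H) => p.fst) :=
      continuous_fst.comp (WithLp.prodContinuousLinearEquiv 2 𝕜 (α := H) (β := H)).continuous
    have hcs : Continuous (fun p : WithLp 2 (H × H) => p.snd) :=
      continuous_snd.comp (WithLp.prodContinuousLinearEquiv 2 𝕜 (α := H) (β := H)).continuous
    have hfst : Tendsto (fun n => ((xn n : H))) atTop (𝓝 q.fst) := by
      have := (hcf.tendsto q).comp hq
      simpa [Function.comp_def, hx1] using this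
    have hsnd : Tendsto (fun n => (A + B) (xn n)) atTop (𝓝 q.snd) := by
      have := (hcs.tendsto q).comp hq
      simpa [Function.comp_def, hx2] using this
    -- the A-components form a Cauchy sequence
    have hcau : CauchySeq (fun n => A ⟨(xn n).1, (xn n).2.1⟩) := by
      rw [Metric.cauchySeq_iff]
      intro δ hδ
      have hsum : (0:ℝ) < α + β + 1 := by linarith
      set δ' : ℝ := δ / (α + β + 1) with hδ'def
      have hδ' : 0 < δ' := div_pos hδ hsum
      obtain ⟨N1, hN1⟩ := Metric.cauchySeq_iff.mp hfst.cauchySeq δ' hδ'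
      obtain ⟨N2, hN2⟩ := Metric.cauchySeq_iff.mp hsnd.cauchySeq δ' hδ'
      refine ⟨max N1 N2, fun m hm n hn => ?_⟩
      have h1 := hN1 m (le_trans (le_max_left _ _) hm) n (le_trans (le_max_left _ _) hn)
      have h2 := hN2 m (le_trans (le_max_right _ _) hm) n (le_trans (le_max_right _ _) hn)
      rw [dist_eq_norm] at h1 h2 ⊢
      have h3 := hbdd (xn m - xn n)
      have h4 : A ⟨(xn m - xn n).1, (Submodule.mem_inf.mp (xn m - xn n).2).1⟩ =
          A ⟨(xn m).1, (xn m).2.1⟩ - A ⟨(xn n).1, (xn n).2.1⟩ := by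
        rw [← LinearPMap.map_sub]
        congr 1
      have h5 : (A + B) (xn m - xn n) = (A + B) (xn m) - (A + B) (xn n) :=
        LinearPMap.map_sub _ _ _
      have h6 : ((xn m - xn n : (A + B).domain) : H) = (xn m : H) - (xn n : H) := rfl
      rw [h4, h5, h6] at h3
      have h7 : ‖(A + B) (xn m) - (A + B) (xn n)‖ < δ' := h2
      have h8 : ‖(xn m : H) - (xn n : H)‖ < δ' := h1
      have h10 : ‖A ⟨(xn m).1, (xn m).2.1⟩ - A ⟨(xn n).1, (xn n).2.1⟩‖ ^ 2 < δ ^ 2 := by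
        have hTn : ‖(A + B) (xn m) - (A + B) (xn n)‖ ^ 2 ≤ δ' ^ 2 :=
          pow_le_pow_left₀ (norm_nonneg _) (le_of_lt h7) 2
        have hxn' : ‖(xn m : H) - (xn n : H)‖ ^ 2 ≤ δ' ^ 2 :=
          pow_le_pow_left₀ (norm_nonneg _) (le_of_lt h8) 2
        have hb1 : α * ‖(A + B) (xn m) - (A + B) (xn n)‖ ^ 2 ≤ α * δ' ^ 2 :=
          mul_le_mul_of_nonneg_left hTn hα
        have hb2 : β * ‖(xn m : H) - (xn n : H)‖ ^ 2 ≤ β * δ' ^ 2 :=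
          mul_le_mul_of_nonneg_left hxn' hβ
        have hfin : (α + β) * δ' ^ 2 < δ ^ 2 := by
          have hδ'2 : δ' ^ 2 = δ ^ 2 / (α + β + 1) ^ 2 := by
            rw [hδ'def, div_pow]
          rw [hδ'2, mul_div_assoc']
          rw [div_lt_iff₀ (by positivity)]
          have hgrow : α + β < (α + β + 1) ^ 2 := by nlinarith
          have := mul_lt_mul_of_pos_right hgrow (show (0:ℝ) < δ ^ 2 by positivity)
          linarith
        calc ‖A ⟨(xn m).1, (xn m).2.1⟩ - A ⟨(xn n).1, (xn n).2.1⟩‖ ^ 2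
            ≤ α * ‖(A + B) (xn m) - (A + B) (xn n)‖ ^ 2 +
              β * ‖(xn m : H) - (xn n : H)‖ ^ 2 := h3
          _ ≤ (α + β) * δ' ^ 2 := by linarith
          _ < δ ^ 2 := hfin
      have := norm_nonneg (A ⟨(xn m).1, (xn m).2.1⟩ - A ⟨(xn n).1, (xn n).2.1⟩)
      nlinarith
    obtain ⟨a, ha⟩ := cauchySeq_tendsto_of_complete hcau
    -- limit lies in the graph of A
    have hqa : Tendsto (fun n => mkK ((xn n : H)) ((1:𝕜) • A ⟨(xn n).1, (xn n).2.1⟩)) atTop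
        (𝓝 (mkK q.fst ((1:𝕜) • a))) := by
      have hmk : Continuous (fun r : H × H => (mkK r.1 r.2 : WithLp 2 (H × H))) :=
        (WithLp.prodContinuousLinearEquiv 2 𝕜 (α := H) (β := H)).symm.continuous
      have hpair : Tendsto (fun n => (((xn n : H)), A ⟨(xn n).1, (xn n).2.1⟩)) atTop
          (𝓝 (q.fst, a)) := hfst.prodMk_nhds ha
      have := (hmk.tendsto (q.fst, a)).comp hpair
      simpa [Function.comp_def, one_smul] using this
    have hmemA : ∀ n, mkK ((xn n : H)) ((1:𝕜) • A ⟨(xn n).1, (xn n).2.1⟩) ∈ grOp (1:𝕜) A :=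
      fun n => mem_grOp.mpr ⟨⟨(xn n).1, (xn n).2.1⟩, rfl⟩
    have hlimA : mkK q.fst ((1:𝕜) • a) ∈ grOp (1:𝕜) A :=
      hGA.mem_of_tendsto hqa (Filter.Eventually.of_forall hmemA)
    obtain ⟨xA, hxA⟩ := mem_grOp.mp hlimA
    have hxA1 : (xA : H) = q.fst := congrArg (fun r : WithLp 2 (H × H) => r.fst) hxA
    have hxA2 : A xA = a := by
      have := congrArg (fun r : WithLp 2 (H × H) => r.snd) hxA
      simpa [one_smul] using this
    -- B-components converge as well
    have hBlim : Tendsto (fun n => B ⟨(xn n).1, (xn n).2.2⟩) atTop (𝓝 (q.snd - a)) := by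
      have h1 : ∀ n, B ⟨(xn n).1, (xn n).2.2⟩ =
          (A + B) (xn n) - A ⟨(xn n).1, (xn n).2.1⟩ := by
        intro n
        rw [happ (xn n)]
        abel
      simp only [h1]
      exact hsnd.sub ha
    -- identify the limit of the B-components
    have hqmem : q.fst ∈ A.domain := hxA1 ▸ xA.2
    have hBval : B ⟨q.fst, hsub hqmem⟩ = q.snd - a := by
      have hperp : ∀ w : B.domain, ⟪(q.snd - a) - B ⟨q.fst, hsub hqmem⟩, (w : H)⟫ = 0 := by
        intro w
        have h1 : Tendsto (fun n => ⟪B ⟨(xn n).1, (xn n).2.2⟩, (w : H)⟫) atTop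
            (𝓝 ⟪q.snd - a, (w : H)⟫) := hBlim.inner tendsto_const_nhds
        have h2 : ∀ n, ⟪B ⟨(xn n).1, (xn n).2.2⟩, (w : H)⟫ = ⟪((xn n : H)), B w⟫ :=
          fun n => hBsymm ⟨(xn n).1, (xn n).2.2⟩ w
        have h3 : Tendsto (fun n => ⟪((xn n : H)), B w⟫) atTop (𝓝 ⟪q.fst, B w⟫) :=
          hfst.inner tendsto_const_nhds
        have h4 : ⟪q.snd - a, (w : H)⟫ = ⟪q.fst, B w⟫ := by
          apply tendsto_nhds_unique _ h3
          simpa [h2] using h1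
        have h5 : ⟪q.fst, B w⟫ = ⟪B ⟨q.fst, hsub hqmem⟩, (w : H)⟫ :=
          (hBsymm ⟨q.fst, hsub hqmem⟩ w).symm
        rw [inner_sub_left, h4, h5, sub_self]
      have hmem0 : (q.snd - a) - B ⟨q.fst, hsub hqmem⟩ ∈ A.domainᗮ := by
        rw [Submodule.mem_orthogonal]
        intro u hu
        rw [← inner_eq_zero_symm]
        exact hperp ⟨u, hsub hu⟩
      have hbot : A.domainᗮ = ⊥ :=
        Submodule.topologicalClosure_eq_top_iff.mp
          (Submodule.dense_iff_topologicalClosure_eq_top.mp hA.1)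
      rw [hbot, Submodule.mem_bot, sub_eq_zero] at hmem0
      exact hmem0.symm
    -- conclude membership of the limit
    refine mem_grOp.mpr ⟨⟨q.fst, ⟨hqmem, hsub hqmem⟩⟩, ?_⟩
    have hTq : (A + B) ⟨q.fst, ⟨hqmem, hsub hqmem⟩⟩ = q.snd := by
      rw [happ ⟨q.fst, ⟨hqmem, hsub hqmem⟩⟩]
      have h1 : A ⟨q.fst, hqmem⟩ = a := by
        rw [← hxA2]
        congr 1
        exact Subtype.ext hxA1.symm
      rw [h1, hBval]
      abel
    rw [hTq, one_smul]
    exact mkK_eta q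
  -- main argument: the adjoint is contained in A + B
  have key : ∀ y : (A + B).adjoint.domain, ∃ xT : (A + B).domain,
      ((xT : H)) = ((y : H)) ∧ (A + B) xT = (A + B).adjoint y := by
    intro y
    haveI : CompleteSpace (grOp (1:𝕜) (A + B)) := hGT.completeSpace_coe
    obtain ⟨g, hg, w, hw, hpw⟩ :=
      Submodule.exists_add_mem_mem_orthogonal (K := grOp (1:𝕜) (A + B))
        (mkK ((y : H)) ((A + B).adjoint y))
    obtain ⟨x₀, hx₀⟩ := mem_grOp.mp hg
    have hg1 : ((x₀ : H)) = g.fst := congrArg (fun r : WithLp 2 (H × H) => r.fst) hx₀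
    have hg2 : (A + B) x₀ = g.snd := by
      have := congrArg (fun r : WithLp 2 (H × H) => r.snd) hx₀
      simpa [one_smul] using this
    have hp1 : ((y : H)) = g.fst + w.fst :=
      congrArg (fun r : WithLp 2 (H × H) => r.fst) hpw
    have hp2 : (A + B).adjoint y = g.snd + w.snd :=
      congrArg (fun r : WithLp 2 (H × H) => r.snd) hpw
    -- the two relations satisfied by w
    have R1 : ∀ xt : (A + B).domain, ⟪(xt : H), w.fst⟫ + ⟪(A + B) xt, w.snd⟫ = 0 := by
      intro xt
      have h0 := (Submodule.mem_orthogonal _ _).mp hw _ (mem_grOp.mpr ⟨xt, rfl⟩)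
      rw [← mkK_eta w, inner_mkK] at h0
      simpa [one_smul] using h0
    have R2 : ∀ xt : (A + B).domain, ⟪w.snd, (xt : H)⟫ = ⟪w.fst, (A + B) xt⟫ := by
      intro xt
      have hws : w.snd = (A + B).adjoint y - (A + B) x₀ := by
        rw [hp2, hg2]; abel
      have hwf : w.fst = ((y : H)) - ((x₀ : H)) := by
        rw [hp1, hg1]; abel
      rw [hws, hwf, inner_sub_left, inner_sub_left]
      have had : ⟪(A + B).adjoint y, (xt : H)⟫ = ⟪(y : H), (A + B) xt⟫ :=
        LinearPMap.adjoint_isFormalAdjoint hdense y xt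
      rw [had, hsymT x₀ xt]
    -- the epsilon trick
    have hbne : (b : ℝ) ^ 2 ≠ 0 := by positivity
    obtain ⟨x, z, hu, hv⟩ := decompose_selfadj hAsymm hA.2 hA.1
      (ε := (b ^ 2)⁻¹) (inv_ne_zero hbne) w
    -- two computations of the same quantity
    have hzx : RCLike.re ⟪A z, (x : H)⟫ = RCLike.re ⟪A x, (z : H)⟫ := by
      rw [hAsymm z x, inner_re_symm]
    have e1 : RCLike.re ⟪w.fst, (x : H)⟫ + RCLike.re ⟪w.snd, (z : H)⟫ =
        ‖(x : H)‖ ^ 2 + ‖(z : H)‖ ^ 2 := by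
      rw [hu, hv, inner_sub_left, inner_add_left, inner_smul_left, inner_smul_left,
        RCLike.conj_ofReal, _root_.map_sub, _root_.map_add, RCLike.re_ofReal_mul,
        RCLike.re_ofReal_mul, inner_self_eq_norm_sq, inner_self_eq_norm_sq, hzx]
      ring
    -- lifts of x and z to the domain of A + B
    set xT : (A + B).domain := ⟨x.1, Submodule.mem_inf.mpr ⟨x.2, hsub x.2⟩⟩ with hxT
    set zT : (A + B).domain := ⟨z.1, Submodule.mem_inf.mpr ⟨z.2, hsub z.2⟩⟩ with hzT
    have e2 : RCLike.re ⟪w.fst, (x : H)⟫ + RCLike.re ⟪w.snd, (z : H)⟫ =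
        -((b ^ 2)⁻¹ * (RCLike.re ⟪(A + B) xT, A x⟫ + RCLike.re ⟪(A + B) zT, A z⟫)) := by
      have f1 : RCLike.re ⟪w.fst, (x : H)⟫ =
          -(RCLike.re ⟪(A + B) xT, (z : H)⟫) - (b ^ 2)⁻¹ * RCLike.re ⟪(A + B) xT, A x⟫ := by
        have r1 := R1 xT
        have r1' : ⟪(x : H), w.fst⟫ = -⟪(A + B) xT, w.snd⟫ := by
          have : ((xT : H)) = ((x : H)) := rfl
          rw [← this]
          linear_combination r1
        have : RCLike.re ⟪w.fst, (x : H)⟫ = RCLike.re ⟪(x : H), w.fst⟫ := inner_re_symm _ _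
        rw [this, r1', hv, inner_add_right, inner_smul_right]
        rw [_root_.map_neg, _root_.map_add, RCLike.re_ofReal_mul]
        ring
      have f2 : RCLike.re ⟪w.snd, (z : H)⟫ =
          RCLike.re ⟪(x : H), (A + B) zT⟫ - (b ^ 2)⁻¹ * RCLike.re ⟪A z, (A + B) zT⟫ := by
        have r2 := R2 zT
        have : ((zT : H)) = ((z : H)) := rfl
        rw [← this, r2, hu, inner_sub_left, inner_smul_left, RCLike.conj_ofReal]
        rw [_root_.map_sub, RCLike.re_ofReal_mul]
      have f3 : RCLike.re ⟪(x : H), (A + B) zT⟫ = RCLike.re ⟪(A + B) xT, (z : H)⟫ := by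
        have h1 : ⟪(A + B) zT, ((xT : H))⟫ = ⟪((zT : H)), (A + B) xT⟫ := hsymT zT xT
        have h2 : RCLike.re ⟪(x : H), (A + B) zT⟫ = RCLike.re ⟪(A + B) zT, (x : H)⟫ :=
          inner_re_symm _ _
        have h3 : ((xT : H)) = ((x : H)) := rfl
        have h4 : ((zT : H)) = ((z : H)) := rfl
        rw [h2, ← h3, h1, h4, inner_re_symm]
      have f4 : RCLike.re ⟪A z, (A + B) zT⟫ = RCLike.re ⟪(A + B) zT, A z⟫ :=
        inner_re_symm _ _
      rw [f1, f2, f3, f4]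
      ring
    have e3 := hbre x
    have e4 := hbre z
    have e5 : ‖(x : H)‖ ^ 2 + ‖(z : H)‖ ^ 2 ≤
        (b ^ 2)⁻¹ * (b ^ 2 / 2 * ‖(x : H)‖ ^ 2 + b ^ 2 / 2 * ‖(z : H)‖ ^ 2) := by
      rw [← e1, e2]
      have hbinv : (0:ℝ) ≤ (b ^ 2)⁻¹ := by positivity
      have h6 : -(RCLike.re ⟪(A + B) xT, A x⟫ + RCLike.re ⟪(A + B) zT, A z⟫) ≤
          b ^ 2 / 2 * ‖(x : H)‖ ^ 2 + b ^ 2 / 2 * ‖(z : H)‖ ^ 2 := by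
        have e3' := e3
        have e4' := e4
        rw [← hxT] at e3'
        rw [← hzT] at e4'
        linarith
      calc -((b ^ 2)⁻¹ * (RCLike.re ⟪(A + B) xT, A x⟫ + RCLike.re ⟪(A + B) zT, A z⟫))
          = (b ^ 2)⁻¹ * -(RCLike.re ⟪(A + B) xT, A x⟫ + RCLike.re ⟪(A + B) zT, A z⟫) := by ring
        _ ≤ (b ^ 2)⁻¹ * (b ^ 2 / 2 * ‖(x : H)‖ ^ 2 + b ^ 2 / 2 * ‖(z : H)‖ ^ 2) :=
            mul_le_mul_of_nonneg_left h6 hbinv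
    have e6 : (b ^ 2)⁻¹ * (b ^ 2 / 2 * ‖(x : H)‖ ^ 2 + b ^ 2 / 2 * ‖(z : H)‖ ^ 2) =
        (‖(x : H)‖ ^ 2 + ‖(z : H)‖ ^ 2) / 2 := by
      field_simp
    have e7 : ‖(x : H)‖ ^ 2 + ‖(z : H)‖ ^ 2 ≤ 0 := by
      rw [e6] at e5
      linarith
    have hx0 : (x : H) = 0 := by
      have := sq_nonneg (‖(x : H)‖)
      have := sq_nonneg (‖(z : H)‖)
      have : ‖(x : H)‖ ^ 2 = 0 := by nlinarith [sq_nonneg ‖(x : H)‖, sq_nonneg ‖(z : H)‖]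
      have := pow_eq_zero_iff (n := 2) (by norm_num) |>.mp this
      exact norm_eq_zero.mp this
    have hz0 : (z : H) = 0 := by
      have : ‖(z : H)‖ ^ 2 = 0 := by nlinarith [sq_nonneg ‖(x : H)‖, sq_nonneg ‖(z : H)‖]
      have := pow_eq_zero_iff (n := 2) (by norm_num) |>.mp this
      exact norm_eq_zero.mp this
    have hxz : x = 0 := Subtype.ext hx0
    have hzz : z = 0 := Subtype.ext hz0
    have hwf0 : w.fst = 0 := by
      rw [hu, hxz, hzz]
      simp
    have hws0 : w.snd = 0 := by
      rw [hv, hxz, hzz]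
      simp
    have hw0 : w = 0 := by
      rw [← mkK_eta w, hwf0, hws0, mkK_zero]
    refine ⟨x₀, ?_, ?_⟩
    · rw [hp1, hwf0, hg1, add_zero]
    · rw [hp2, hws0, hg2, add_zero]
  -- assemble the two inclusions
  have hle2 : (A + B).adjoint ≤ (A + B) := by
    constructor
    · intro yv hyv
      obtain ⟨xT, hx1, _⟩ := key ⟨yv, hyv⟩
      have : (⟨yv, hyv⟩ : (A + B).adjoint.domain).1 ∈ (A + B).domain := hx1 ▸ xT.2
      exact this
    · intro y' z' hyz
      obtain ⟨xT, hx1, hx2⟩ := key y'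
      rw [← hx2]
      congr 1
      exact Subtype.ext (hx1.trans hyz)
  have heq : (A + B).adjoint = (A + B) :=
    LinearPMap.eq_of_le_of_domain_eq hle2 (le_antisymm hle2.1 hle.1)
  exact ⟨hdense, heq⟩

end Main

/-- **Corollary (selfadjoint perturbation).** Let `A, B` be symmetric operators in a
Hilbert space `H` with `dom A ⊆ dom B`. If `A` is selfadjoint, `A` is `(A+B)`-bounded, and
`‖B x‖² ≤ ‖A x‖² + ‖(A+B) x‖² + b²‖x‖²` on `dom A` for some `b > 0`, then `A + B`
(defined on `dom A`) is selfadjoint. -/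
theorem selfadjoint_add {𝕜 H : Type*} [RCLike 𝕜]
    [NormedAddCommGroup H] [InnerProductSpace 𝕜 H] [CompleteSpace H]
    (A B : H →ₗ.[𝕜] H) (hAsymm : A.IsSymmetricOp) (hBsymm : B.IsSymmetricOp)
    (hsub : A.domain ≤ B.domain)
    (hA : A.IsSelfAdjointOp)
    (hbdd : ∃ α β : ℝ, 0 ≤ α ∧ 0 ≤ β ∧ ∀ x : (A + B).domain,
      ‖A ⟨x.1, (Submodule.mem_inf.mp x.2).1⟩‖ ^ 2 ≤
        α * ‖(A + B) x‖ ^ 2 + β * ‖(x : H)‖ ^ 2)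
    (hb : ∃ b : ℝ, 0 < b ∧ ∀ x : A.domain,
      ‖B ⟨x.1, hsub x.2⟩‖ ^ 2 ≤ ‖A x‖ ^ 2 +
        ‖(A + B) ⟨x.1, Submodule.mem_inf.mpr ⟨x.2, hsub x.2⟩⟩‖ ^ 2 + b ^ 2 * ‖(x : H)‖ ^ 2) :
    (A + B).IsSelfAdjointOp := by
  exact selfadjoint_add' A B hAsymm hBsymm hsub hA hbdd hb
end

section
/- Let A and B be symmetric linear operators in a real or complex Hilbert space H with common dense domain 𝒟. Assume that A is selfadjoint (so dom A = 𝒟) and that ⟨A x, B y⟩ = ⟨B x, A y⟩ for all x, y ∈ 𝒟. Then both B and A + B (each with domain 𝒟) are essentially selfadjoint. -/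
set_option linter.unusedSectionVars false

open LinearPMap

noncomputable section AuxNelson

variable {𝕜 H : Type*} [RCLike 𝕜] [NormedAddCommGroup H] [InnerProductSpace 𝕜 H]
  [CompleteSpace H]

local notation "⟪" x ", " y "⟫" => @inner 𝕜 _ _ x y

namespace NelsonAux

variable {D : Submodule 𝕜 H} {a b : D →ₗ[𝕜] H}

/-- the graph of `a` as a set -/
def gset (a : D →ₗ[𝕜] H) : Set (H × H) := {p : H × H | ∃ x : D, ((x : H), a x) = p}

/-- Selfadjointness-from-outside condition -/
def SA (a : D →ₗ[𝕜] H) : Prop :=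
  ∀ y w : H, (∀ x : D, ⟪w, (x : H)⟫ = ⟪y, a x⟫) → ∃ hy : y ∈ D, a ⟨y, hy⟩ = w

/-- symmetry -/
def Symm (a : D →ₗ[𝕜] H) : Prop :=
  ∀ x y : D, ⟪a x, (y : H)⟫ = ⟪(x : H), a y⟫

theorem graph_closed (ha : Symm a) (hsa : SA a) : IsClosed (gset a) := by
  refine isClosed_of_closure_subset ?_
  rintro ⟨y, w⟩ hp
  rcases mem_closure_iff_seq_limit.mp hp with ⟨s, hs, hlim⟩
  choose x hx using hs
  have hy : Filter.Tendsto (fun n => ((x n : H))) Filter.atTop (nhds y) := by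
    have := (continuous_fst.tendsto (y, w)).comp hlim
    refine this.congr fun n => ?_
    rw [Function.comp_apply, ← hx n]
  have hw : Filter.Tendsto (fun n => a (x n)) Filter.atTop (nhds w) := by
    have := (continuous_snd.tendsto (y, w)).comp hlim
    refine this.congr fun n => ?_
    rw [Function.comp_apply, ← hx n]
  have key : ∀ z : D, ⟪w, (z : H)⟫ = ⟪y, a z⟫ := by
    intro z
    have h1 : Filter.Tendsto (fun n => ⟪a (x n), (z : H)⟫) Filter.atTop (nhds ⟪w, (z : H)⟫) :=
      hw.inner tendsto_const_nhds
    have h2 : Filter.Tendsto (fun n => ⟪((x n : H)), a z⟫) Filter.atTop (nhds ⟪y, a z⟫) :=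
      hy.inner tendsto_const_nhds
    exact tendsto_nhds_unique (h1.congr fun n => ha (x n) z) h2
  rcases hsa y w key with ⟨hy', hval⟩
  exact ⟨⟨y, hy'⟩, by rw [hval]⟩

theorem riesz_step (ha : Symm a) (hsa : SA a) (f : H) :
    ∃ t : H, ∃ ht : t ∈ D, ∀ y : D,
      ⟪(y : H), t⟫ + ⟪a y, a ⟨t, ht⟩⟫ = ⟪(y : H), f⟫ := by
  classical
  set e : WithLp 2 (H × H) ≃L[𝕜] H × H := WithLp.prodContinuousLinearEquiv 2 𝕜 H H with he
  set G₀ : Submodule 𝕜 (H × H) := LinearMap.range (D.subtype.prod a) with hG₀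
  set G : Submodule 𝕜 (WithLp 2 (H × H)) :=
    G₀.comap (e : WithLp 2 (H × H) →ₗ[𝕜] H × H) with hG
  have hG₀set : (G₀ : Set (H × H)) = gset a := by
    ext p
    constructor
    · rintro ⟨x, rfl⟩; exact ⟨x, rfl⟩
    · rintro ⟨x, rfl⟩; exact ⟨x, rfl⟩
  have hGclosed : IsClosed (G : Set (WithLp 2 (H × H))) := by
    have h1 : (G : Set (WithLp 2 (H × H))) = e ⁻¹' (G₀ : Set (H × H)) := rfl
    rw [h1, hG₀set]
    exact (graph_closed ha hsa).preimage e.continuous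
  haveI : CompleteSpace G := hGclosed.completeSpace_coe
  set χ : G →L[𝕜] 𝕜 := (innerSL 𝕜 f).comp ((ContinuousLinearMap.fst 𝕜 H H).comp
    ((e : WithLp 2 (H × H) →L[𝕜] H × H).comp G.subtypeL)) with hχ
  set w : G := (InnerProductSpace.toDual 𝕜 G).symm χ with hwdef
  have hw : ∀ g : G, ⟪w, g⟫ = ⟪f, (e (g : WithLp 2 (H × H))).1⟫ := fun g =>
    InnerProductSpace.toDual_symm_apply
  obtain ⟨x₀, hx₀⟩ := w.2
  refine ⟨(x₀ : H), x₀.2, fun y => ?_⟩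
  have hmemy : e.symm ((y : H), a y) ∈ G := by
    show e (e.symm ((y : H), a y)) ∈ G₀
    rw [e.apply_symm_apply]
    exact ⟨y, rfl⟩
  have hy := congrArg (starRingEnd 𝕜) (hw ⟨e.symm ((y : H), a y), hmemy⟩)
  rw [inner_conj_symm, inner_conj_symm] at hy
  have hg1 : (e ((⟨e.symm ((y : H), a y), hmemy⟩ : G) : WithLp 2 (H × H))) = ((y : H), a y) :=
    e.apply_symm_apply _
  rw [hg1] at hy
  have hinner : ⟪(⟨e.symm ((y : H), a y), hmemy⟩ : G), w⟫
      = ⟪(y : H), (x₀ : H)⟫ + ⟪a y, a x₀⟫ := by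
    have h2 : WithLp.ofLp (w : WithLp 2 (H × H)) = ((x₀ : H), a x₀) := by
      have : e (w : WithLp 2 (H × H)) = ((x₀ : H), a x₀) := hx₀.symm
      exact this
    have h3 : ⟪(⟨e.symm ((y : H), a y), hmemy⟩ : G), w⟫
        = ⟪(e.symm ((y : H), a y) : WithLp 2 (H × H)), (w : WithLp 2 (H × H))⟫ := rfl
    rw [h3, WithLp.prod_inner_apply,
      show ((WithLp.ofLp (w : WithLp 2 (H × H))).fst) = (x₀ : H) from congrArg Prod.fst h2,
      show ((WithLp.ofLp (w : WithLp 2 (H × H))).snd) = a x₀ from congrArg Prod.snd h2]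
    rfl
  rw [hinner] at hy
  exact hy

theorem smoothing (hD : Dense (D : Set H)) (ha : Symm a) (hsa : SA a)
    (hb : Symm b) (hab : ∀ x y : D, ⟪a x, b y⟫ = ⟪b x, a y⟫) :
    ∃ T : H → H, ∃ hT : ∀ f, T f ∈ D,
      (∀ f, ‖T f‖ ≤ ‖f‖) ∧
      (∀ f : D, ‖(f : H) - T f‖ ≤ ‖a f‖) ∧
      (∀ f g : H, T (f - g) = T f - T g) ∧
      (∀ u v : H, (∀ x : D, ⟪v, (x : H)⟫ = ⟪u, b x⟫) →
        b ⟨T u, hT u⟩ = T v) := by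
  classical
  choose T hT hP using riesz_step (a := a) ha hsa
  set T' : H → D := fun f => ⟨T f, hT f⟩ with hT'def
  have hT'coe : ∀ f, ((T' f : H)) = T f := fun f => rfl
  have hPc : ∀ (f : H) (y : D), ⟪T f, (y : H)⟫ + ⟪a (T' f), a y⟫ = ⟪f, (y : H)⟫ := by
    intro f y
    have h0 := congrArg (starRingEnd 𝕜) (hP f y)
    simp only [_root_.map_add, inner_conj_symm] at h0
    exact h0
  -- F2 : a (T' f) ∈ D and a (a (T' f)) = f - T f
  have hF2' : ∀ f : H, ∃ hm : a (T' f) ∈ D, a ⟨a (T' f), hm⟩ = f - T f := by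
    intro f
    apply hsa
    intro x
    have h0 := hPc f x
    rw [inner_sub_left]
    linear_combination -h0
  choose hmem2 hF2 using hF2'
  set aT : H → D := fun f => ⟨a (T' f), hmem2 f⟩ with haTdef
  have haTcoe : ∀ f, ((aT f : H)) = a (T' f) := fun f => rfl
  have hF2a : ∀ f : H, a (aT f) = f - T f := fun f => hF2 f
  -- F3 : T is symmetric
  have hF3 : ∀ g f : H, ⟪T g, f⟫ = ⟪g, T f⟫ := by
    intro g f
    have h1 := hP f (T' g)
    have h1' := hPc g (T' f)
    rw [hT'coe] at h1 h1'
    linear_combination h1' - h1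
  -- F4 : norm bounds
  have hF4 : ∀ f : H, ‖T f‖ ^ 2 + ‖a (T' f)‖ ^ 2 ≤ ‖T f‖ * ‖f‖ := by
    intro f
    have h0 := hP f (T' f)
    rw [hT'coe] at h0
    rw [inner_self_eq_norm_sq_to_K, inner_self_eq_norm_sq_to_K] at h0
    have hre := congrArg RCLike.re h0
    simp only [_root_.map_add, ← RCLike.ofReal_pow, RCLike.ofReal_re] at hre
    rw [hre]
    exact re_inner_le_norm (𝕜 := 𝕜) (T f) f
  have hTnorm : ∀ f, ‖T f‖ ≤ ‖f‖ := by
    intro f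
    by_cases h : ‖T f‖ = 0
    · rw [h]; exact norm_nonneg f
    · have h0 := hF4 f
      have h1 : 0 < ‖T f‖ := lt_of_le_of_ne (norm_nonneg _) (Ne.symm h)
      nlinarith [sq_nonneg (‖a (T' f)‖)]
  have haTnorm : ∀ f, ‖a (T' f)‖ ≤ ‖f‖ := by
    intro f
    have h0 := hF4 f
    have h1 := hTnorm f
    nlinarith [norm_nonneg (T f), norm_nonneg f, norm_nonneg (a (T' f))]
  -- uniqueness
  have huniq : ∀ (f : H) (z : D),
      (∀ y : D, ⟪(y : H), (z : H)⟫ + ⟪a y, a z⟫ = ⟪(y : H), f⟫) → z = T' f := by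
    intro f z hz
    have hd : ∀ y : D, ⟪(y : H), ((z - T' f : D) : H)⟫ + ⟪a y, a (z - T' f)⟫ = 0 := by
      intro y
      have h0 := hz y
      have h1 := hP f y
      rw [_root_.map_sub, inner_sub_right, Submodule.coe_sub, inner_sub_right]
      linear_combination h0 - h1
    have hdd := hd (z - T' f)
    rw [inner_self_eq_norm_sq_to_K, inner_self_eq_norm_sq_to_K] at hdd
    have hre := congrArg RCLike.re hdd
    simp only [_root_.map_add, _root_.map_zero, ← RCLike.ofReal_pow, RCLike.ofReal_re] at hre
    have hz0 : ‖((z - T' f : D) : H)‖ = 0 := by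
      nlinarith [sq_nonneg ‖((z - T' f : D) : H)‖, sq_nonneg ‖a (z - T' f)‖]
    have : ((z - T' f : D) : H) = 0 := norm_eq_zero.mp hz0
    have : (z - T' f : D) = 0 := by exact_mod_cast this
    exact sub_eq_zero.mp this
  -- F5 : T (a x) = a (T' x)
  have hF5 : ∀ x : D, T' (a x) = aT (x : H) := by
    intro x
    refine (huniq (a x) (aT (x : H)) ?_).symm
    intro y
    calc ⟪(y : H), ((aT (x : H) : H))⟫ + ⟪a y, a (aT (x : H))⟫
        = ⟪a y, T (x : H)⟫ + ⟪a y, (x : H) - T (x : H)⟫ := by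
          rw [hF2a]
          congr 1
          exact (ha y (T' (x : H))).symm
      _ = ⟪a y, (x : H)⟫ := by rw [inner_sub_right]; ring
      _ = ⟪(y : H), a x⟫ := ha y x
  have hF5' : ∀ x : D, T (a x) = a (T' (x : H)) :=
    fun x => congrArg Subtype.val (hF5 x)
  -- F6 : x - T x = a (T' (a x))
  have hF6 : ∀ x : D, (x : H) - T (x : H) = a (T' (a x)) := by
    intro x
    rw [hF5 x]
    exact (hF2a (x : H)).symm
  have hgraphbound : ∀ x : D, ‖(x : H) - T (x : H)‖ ≤ ‖a x‖ := by
    intro x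
    rw [hF6]
    exact haTnorm (a x)
  -- F7 : T (b y) = b (T' y)
  have hF7 : ∀ y : D, T (b y) = b (T' (y : H)) := by
    intro y
    have key : ∀ u : H, ⟪u, T (b y)⟫ = ⟪u, b (T' (y : H))⟫ := by
      intro u
      have e1 : ⟪u, T (b y)⟫ = ⟪b (T' u), (y : H)⟫ := by
        rw [← hF3 u (b y)]
        exact (hb (T' u) y).symm
      have hu : u = T u + a (aT u) := by rw [hF2a]; abel
      have e2 : ⟪u, b (T' (y : H))⟫
          = ⟪T u, b (T' (y : H))⟫ + ⟪a (aT u), b (T' (y : H))⟫ := by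
        conv_lhs => rw [hu]
        rw [inner_add_left]
      have e3 : ⟪T u, b (T' (y : H))⟫ = ⟪b (T' u), T (y : H)⟫ :=
        (hb (T' u) (T' (y : H))).symm
      have e4 : ⟪a (aT u), b (T' (y : H))⟫ = ⟪b (aT u), T (a y)⟫ := by
        rw [hab (aT u) (T' (y : H)), hF5' y]
      have e5 : ⟪b (aT u), T (a y)⟫ = ⟪b (T' u), (y : H) - T (y : H)⟫ := by
        rw [hF6 y, ← hab (T' u) (T' (a y))]
        exact hb (aT u) (T' (a y))
      rw [e1, e2, e3, e4, e5, ← inner_add_right]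
      congr 1
      abel
    have h0 : ⟪T (b y) - b (T' (y : H)), T (b y) - b (T' (y : H))⟫ = 0 := by
      rw [inner_sub_right, key (T (b y) - b (T' (y : H))), sub_self]
    exact sub_eq_zero.mp (inner_self_eq_zero.mp h0)
  -- subtraction
  have hsub : ∀ f g : H, T (f - g) = T f - T g := by
    intro f g
    have h0 : T' f - T' g = T' (f - g) := by
      apply huniq (f - g) (T' f - T' g)
      intro y
      rw [_root_.map_sub, inner_sub_right, Submodule.coe_sub, inner_sub_right, inner_sub_right]
      have h1 := hP f y
      have h2 := hP g y
      linear_combination h1 - h2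
    have h1 := congrArg Subtype.val h0
    simpa using h1.symm
  -- conclusion
  refine ⟨T, hT, hTnorm, hgraphbound, hsub, ?_⟩
  intro u v huv
  have key : ∀ g : D, ⟪(g : H), b (T' u)⟫ = ⟪(g : H), T v⟫ := by
    intro g
    calc ⟪(g : H), b (T' u)⟫ = ⟪b g, T u⟫ := (hb g (T' u)).symm
      _ = ⟪T (b g), u⟫ := (hF3 (b g) u).symm
      _ = ⟪b (T' ((g : H))), u⟫ := by rw [hF7 g]
      _ = (starRingEnd 𝕜) ⟪u, b (T' ((g : H)))⟫ := (inner_conj_symm _ _).symm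
      _ = (starRingEnd 𝕜) ⟪v, ((T' ((g : H)) : H))⟫ := by rw [huv (T' ((g : H)))]
      _ = ⟪T ((g : H)), v⟫ := inner_conj_symm _ _
      _ = ⟪(g : H), T v⟫ := hF3 _ _
  have h0 : ∀ g : D, ⟪(g : H), b (T' u) - T v⟫ = 0 := by
    intro g
    rw [inner_sub_right, key g, sub_self]
  have hfin := hD.eq_zero_of_inner_right 𝕜 (fun v hv => h0 ⟨v, hv⟩)
  rw [sub_eq_zero] at hfin
  exact hfin

theorem main_prop (hD : Dense (D : Set H)) (ha : Symm a) (hsa : SA a)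
    (hb : Symm b) (hab : ∀ x y : D, ⟪a x, b y⟫ = ⟪b x, a y⟫)
    (u v : H) (huv : ∀ x : D, ⟪v, (x : H)⟫ = ⟪u, b x⟫) :
    (u, v) ∈ closure (gset b) := by
  classical
  -- the scaled operators
  have key : ∀ n : ℕ, ∃ T : H → H, ∃ hT : ∀ f, T f ∈ D,
      (∀ f, ‖T f‖ ≤ ‖f‖) ∧
      (∀ f : D, ‖(f : H) - T f‖ ≤ (((n : ℝ) + 1)⁻¹) * ‖a f‖) ∧
      (∀ f g : H, T (f - g) = T f - T g) ∧
      (b ⟨T u, hT u⟩ = T v) := by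
    intro n
    set c : 𝕜 := ((((n : ℝ) + 1)⁻¹ : ℝ) : 𝕜) with hc
    have hcconj : (starRingEnd 𝕜) c = c := RCLike.conj_ofReal _
    have hcne : c ≠ 0 := by
      simp only [hc, ne_eq, RCLike.ofReal_eq_zero, inv_eq_zero]
      positivity
    set a' : D →ₗ[𝕜] H := c • a with ha'
    have ha'apply : ∀ x : D, a' x = c • a x := fun x => rfl
    have hsymm' : Symm a' := by
      intro x y
      rw [ha'apply, ha'apply, inner_smul_left, inner_smul_right, hcconj, ha x y]
    have hsa' : SA a' := by
      intro y w h
      have h' : ∀ x : D, ⟪c⁻¹ • w, (x : H)⟫ = ⟪y, a x⟫ := by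
        intro x
        rw [inner_smul_left, map_inv₀, hcconj, h x, ha'apply, inner_smul_right,
          ← mul_assoc, inv_mul_cancel₀ hcne, one_mul]
      obtain ⟨hy, hval⟩ := hsa y (c⁻¹ • w) h'
      refine ⟨hy, ?_⟩
      rw [ha'apply, hval, smul_smul, mul_inv_cancel₀ hcne, one_smul]
    have hab' : ∀ x y : D, ⟪a' x, b y⟫ = ⟪b x, a' y⟫ := by
      intro x y
      rw [ha'apply, ha'apply, inner_smul_left, inner_smul_right, hcconj, hab x y]
    obtain ⟨T, hT, h1, h2, h3, h4⟩ := smoothing hD hsymm' hsa' hb hab'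
    refine ⟨T, hT, h1, ?_, h3, h4 u v huv⟩
    intro f
    have := h2 f
    rw [ha'apply, norm_smul, hc, RCLike.norm_ofReal, abs_of_pos (by positivity)] at this
    exact this
  choose T hT h1 h2 h3 h4 using key
  -- convergence of the mollifiers
  have hconv : ∀ w : H, Filter.Tendsto (fun n => T n w) Filter.atTop (nhds w) := by
    intro w
    rw [Metric.tendsto_atTop]
    intro ε hε
    obtain ⟨x, hxD, hx⟩ := hD.exists_dist_lt w (by positivity : (0:ℝ) < ε / 3)
    set x' : D := ⟨x, hxD⟩ with hx'
    obtain ⟨N, hN⟩ := exists_nat_gt (3 * ‖a x'‖ / ε)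
    refine ⟨N, fun n hn => ?_⟩
    have hb1 : ‖T n w - T n x‖ ≤ ‖w - x‖ := by
      rw [← h3 n w x]; exact h1 n (w - x)
    have hb2 : ‖(x : H) - T n x‖ ≤ (((n : ℝ) + 1)⁻¹) * ‖a x'‖ := h2 n x'
    have hdist : dist w x < ε / 3 := hx
    rw [dist_eq_norm] at hdist ⊢
    have hn' : (3 : ℝ) * ‖a x'‖ / ε < (n : ℝ) + 1 := by
      have : (N : ℝ) ≤ (n : ℝ) := by exact_mod_cast hn
      linarith
    have hb3 : (((n : ℝ) + 1)⁻¹) * ‖a x'‖ ≤ ε / 3 := by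
      rcases le_or_gt ‖a x'‖ 0 with h | h
      · have : ‖a x'‖ = 0 := le_antisymm h (norm_nonneg _)
        rw [this, mul_zero]; positivity
      · rw [div_lt_iff₀ hε] at hN
        have hpos : (0 : ℝ) < (n : ℝ) + 1 := by positivity
        rw [inv_mul_le_iff₀ hpos]
        rw [div_lt_iff₀ hε] at hn'
        nlinarith
    calc ‖T n w - w‖ = ‖(T n w - T n x) + (T n x - x) + (x - w)‖ := by
          rw [show T n w - w = (T n w - T n x) + (T n x - x) + (x - w) by abel]
      _ ≤ ‖T n w - T n x‖ + ‖T n x - x‖ + ‖x - w‖ := by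
          exact norm_add₃_le
      _ ≤ ‖w - x‖ + (((n : ℝ) + 1)⁻¹) * ‖a x'‖ + ‖x - w‖ := by
          rw [← norm_neg (T n x - x)]
          simp only [neg_sub]
          exact add_le_add (add_le_add hb1 hb2) le_rfl
      _ < ε / 3 + ε / 3 + ε / 3 := by
          rw [← norm_neg (x - w)]
          simp only [neg_sub]
          exact add_lt_add_of_lt_of_le (add_lt_add_of_lt_of_le hdist hb3) hdist.le
      _ = ε := by ring
  -- the approximating sequence lies in the graph
  have htu := hconv u
  have htv : Filter.Tendsto (fun n => b ⟨T n u, hT n u⟩) Filter.atTop (nhds v) := by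
    have heq : (fun n => b ⟨T n u, hT n u⟩) = fun n => T n v := by
      funext n; exact h4 n
    rw [heq]
    exact hconv v
  refine mem_closure_of_tendsto (htu.prodMk_nhds htv) ?_
  filter_upwards with n
  exact ⟨⟨T n u, hT n u⟩, rfl⟩

end NelsonAux

namespace LinearPMap

theorem adjoint_isClosed' {T : H →ₗ.[𝕜] H} (hT : Dense (T.domain : Set H)) :
    T.adjoint.IsClosed := by
  have hset : (T.adjoint.graph : Set (H × H)) =
      ⋂ x : T.domain, {p : H × H | ⟪p.2, (x : H)⟫ = ⟪p.1, T x⟫} := by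
    ext ⟨y, z⟩
    simp only [Set.mem_iInter, Set.mem_setOf_eq, SetLike.mem_coe]
    constructor
    · intro hmem x
      rcases T.adjoint.mem_graph_iff.mp hmem with ⟨w, hw1, hw2⟩
      rw [show y = (w : H) from hw1.symm, show z = T.adjoint w from hw2.symm]
      exact adjoint_isFormalAdjoint hT w x
    · intro h
      have hy : y ∈ T.adjoint.domain := mem_adjoint_domain_of_exists y ⟨z, h⟩
      have hz : T.adjoint ⟨y, hy⟩ = z := adjoint_apply_eq hT ⟨y, hy⟩ h
      exact T.adjoint.mem_graph_iff.mpr ⟨⟨y, hy⟩, rfl, hz⟩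
  show _root_.IsClosed (T.adjoint.graph : Set (H × H))
  rw [hset]
  refine isClosed_iInter fun x => ?_
  exact isClosed_eq ((continuous_snd.inner continuous_const))
    ((continuous_fst.inner continuous_const))

/-- closure of a formally-selfadjoint (symmetric) operator is symmetric. -/
theorem closure_symm {T : H →ₗ.[𝕜] H} (hsymm : T.IsFormalAdjoint T) (hcl : T.IsClosable) :
    T.closure.IsFormalAdjoint T.closure := by
  intro x y
  have hgr : (T.closure.graph : Set (H × H)) = _root_.closure (T.graph : Set (H × H)) := by
    rw [← hcl.graph_closure_eq_closure_graph]
    exact T.graph.topologicalClosure_coe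
  have hx : ((x : H), T.closure x) ∈ _root_.closure (T.graph : Set (H × H)) := by
    rw [← hgr]; exact T.closure.mem_graph x
  have hy : ((y : H), T.closure y) ∈ _root_.closure (T.graph : Set (H × H)) := by
    rw [← hgr]; exact T.closure.mem_graph y
  set S : Set ((H × H) × (H × H)) := {q | ⟪q.1.2, q.2.1⟫ = ⟪q.1.1, q.2.2⟫} with hS
  have hSclosed : _root_.IsClosed S :=
    isClosed_eq ((continuous_fst.snd.inner continuous_snd.fst))
      ((continuous_fst.fst.inner continuous_snd.snd))
  have hsub : (T.graph : Set (H × H)) ×ˢ (T.graph : Set (H × H)) ⊆ S := by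
    rintro ⟨p, q⟩ ⟨hp, hq⟩
    rcases T.mem_graph_iff.mp hp with ⟨w1, hw11, hw12⟩
    rcases T.mem_graph_iff.mp hq with ⟨w2, hw21, hw22⟩
    rw [hS, Set.mem_setOf_eq]
    simp only
    rw [← hw11, ← hw12, ← hw21, ← hw22]
    exact hsymm w1 w2
  have hmem : (((x : H), T.closure x), ((y : H), T.closure y)) ∈ S := by
    have h1 : (((x : H), T.closure x), ((y : H), T.closure y)) ∈
        _root_.closure ((T.graph : Set (H × H)) ×ˢ (T.graph : Set (H × H))) := by
      rw [closure_prod_eq]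
      exact ⟨hx, hy⟩
    exact closure_minimal hsub hSclosed h1
  exact hmem

theorem isClosed_closure_eq {T : H →ₗ.[𝕜] H} (hT : T.IsClosed) : T.closure = T := by
  apply eq_of_eq_graph
  rw [← hT.isClosable.graph_closure_eq_closure_graph]
  exact hT.submodule_topologicalClosure_eq

/-- the core theorem -/
theorem ess_selfadjoint_core (A C : H →ₗ.[𝕜] H) (hdense : Dense (A.domain : Set H))
    (hA : A.IsSelfAdjointOp) (hAsymm : A.IsSymmetricOp)
    (hdomC : C.domain = A.domain)
    (hCsymm : C.IsSymmetricOp)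
    (hcommC : ∀ x y : A.domain,
      ⟪A x, C ⟨y.1, hdomC.ge y.2⟩⟫ = ⟪C ⟨x.1, hdomC.ge x.2⟩, A y⟫) :
    C.IsEssSelfAdjointOp := by
  classical
  set a : A.domain →ₗ[𝕜] H := A.toFun with hadef
  set c : A.domain →ₗ[𝕜] H := C.toFun.comp (Submodule.inclusion hdomC.ge) with hcdef
  have hcapply : ∀ x : A.domain, c x = C ⟨x.1, hdomC.ge x.2⟩ := fun x => rfl
  have hdenseC : Dense (C.domain : Set H) := hdomC ▸ hdense
  have hsymm_a : NelsonAux.Symm a := fun x y => hAsymm x y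
  have hsymm_c : NelsonAux.Symm c := fun x y =>
    hCsymm ⟨x.1, hdomC.ge x.2⟩ ⟨y.1, hdomC.ge y.2⟩
  have hab : ∀ x y : A.domain, ⟪a x, c y⟫ = ⟪c x, a y⟫ := fun x y => hcommC x y
  have hsa : NelsonAux.SA a := by
    intro y w h
    have hy : y ∈ A.adjoint.domain := mem_adjoint_domain_of_exists y ⟨w, h⟩
    have hval : A.adjoint ⟨y, hy⟩ = w := adjoint_apply_eq hdense ⟨y, hy⟩ h
    rcases ext_iff.mp hA.2 with ⟨hdom_eq, hfun_eq⟩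
    refine ⟨hdom_eq ▸ hy, ?_⟩
    rw [← hval]
    exact (@hfun_eq y hy (hdom_eq ▸ hy)).symm
  -- closability
  have hCformal : C.IsFormalAdjoint C := fun x y => hCsymm x y
  have hC_le_adj : C ≤ C.adjoint := hCformal.le_adjoint hdenseC
  have hadj_closed := adjoint_isClosed' hdenseC
  have hclosable : C.IsClosable := hadj_closed.isClosable.leIsClosable hC_le_adj
  have hdense_cl : Dense (C.closure.domain : Set H) :=
    Dense.mono (SetLike.coe_subset_coe.mpr (le_closure C).1) hdenseC
  -- graph identification
  have hgset : NelsonAux.gset c = (C.graph : Set (H × H)) := by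
    ext p
    constructor
    · rintro ⟨x, rfl⟩
      exact C.mem_graph ⟨x.1, hdomC.ge x.2⟩
    · intro hp
      rcases C.mem_graph_iff.mp hp with ⟨x', hx1, hx2⟩
      refine ⟨⟨x'.1, hdomC.le x'.2⟩, ?_⟩
      have hpe : ((x' : H), C x') = p := Prod.ext hx1 hx2
      rw [← hpe]
      rfl
  -- adjoint ≤ closure (the analytic heart)
  have hadj_le : C.adjoint ≤ C.closure := by
    apply le_of_le_graph
    intro p hp
    rcases C.adjoint.mem_graph_iff.mp hp with ⟨u, hu1, hu2⟩
    have huv : ∀ x : A.domain, ⟪C.adjoint u, (x : H)⟫ = ⟪(u : H), c x⟫ := fun x =>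
      adjoint_isFormalAdjoint hdenseC u ⟨x.1, hdomC.ge x.2⟩
    have hcl := NelsonAux.main_prop hdense hsymm_a hsa hsymm_c hab
      (u : H) (C.adjoint u) huv
    rw [hgset] at hcl
    have hgr : _root_.closure (C.graph : Set (H × H)) = (C.closure.graph : Set (H × H)) := by
      rw [← hclosable.graph_closure_eq_closure_graph]
      exact (C.graph.topologicalClosure_coe).symm
    rw [hgr] at hcl
    have hpe : ((u : H), C.adjoint u) = p := Prod.ext hu1 hu2
    rw [← hpe]
    exact hcl
  have hle_adj : C.closure ≤ C.adjoint := by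
    have h1 := hadj_closed.isClosable.closure_mono hC_le_adj
    rwa [isClosed_closure_eq hadj_closed] at h1
  have heq : C.closure = C.adjoint := le_antisymm hle_adj hadj_le
  -- symmetry of the closure
  have hclsymm : C.closure.IsFormalAdjoint C.closure := closure_symm hCformal hclosable
  have hE1 : C.closure ≤ C.closure.adjoint := hclsymm.le_adjoint hdense_cl
  have hE2 : C.closure.adjoint ≤ C.adjoint := by
    have hform : C.closure.adjoint.IsFormalAdjoint C := by
      intro u x
      have h1 := adjoint_isFormalAdjoint hdense_cl u ⟨x.1, (le_closure C).1 x.2⟩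
      rw [h1]
      congr 1
      exact ((le_closure C).2 (x := x) (y := ⟨x.1, (le_closure C).1 x.2⟩) rfl).symm
    exact hform.symm.le_adjoint hdenseC
  rw [← heq] at hE2
  exact ⟨hclosable, hdense_cl, le_antisymm hE2 hE1⟩

end LinearPMap

end AuxNelson

/-- **Theorem (Nelson-type perturbation).** Let `A, B` be symmetric operators in a Hilbert
space `H` with common dense domain `𝒟`. If `A` is selfadjoint and
`⟪A x, B y⟫ = ⟪B x, A y⟫` for all `x, y ∈ 𝒟`, then `B` and `A + B` (each with domain `𝒟`)
are essentially selfadjoint. -/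
theorem essentially_selfadjoint_of_comm {𝕜 H : Type*} [RCLike 𝕜]
    [NormedAddCommGroup H] [InnerProductSpace 𝕜 H] [CompleteSpace H]
    (A B : H →ₗ.[𝕜] H) (hdom : A.domain = B.domain) (hdense : Dense (A.domain : Set H))
    (hAsymm : A.IsSymmetricOp) (hBsymm : B.IsSymmetricOp)
    (hA : A.IsSelfAdjointOp)
    (hcomm : ∀ x y : A.domain,
      inner (𝕜 := 𝕜) (A x) (B ⟨y.1, hdom.le y.2⟩) =
        inner (𝕜 := 𝕜) (B ⟨x.1, hdom.le x.2⟩) (A y)) :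
    B.IsEssSelfAdjointOp ∧ (A + B).IsEssSelfAdjointOp := by
  constructor
  · exact LinearPMap.ess_selfadjoint_core A B hdense hA hAsymm hdom.symm hBsymm
      (fun x y => hcomm x y)
  · have hdomC : (A + B).domain = A.domain := by
      rw [LinearPMap.add_domain, ← hdom, inf_idem]
    have hCsymm : (A + B).IsSymmetricOp := by
      intro x y
      rw [LinearPMap.add_apply A B x, LinearPMap.add_apply A B y,
        inner_add_left, inner_add_right]
      rw [hAsymm ⟨x.1, x.2.1⟩ ⟨y.1, y.2.1⟩, hBsymm ⟨x.1, x.2.2⟩ ⟨y.1, y.2.2⟩]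
    refine LinearPMap.ess_selfadjoint_core A (A + B) hdense hA hAsymm hdomC hCsymm ?_
    intro x y
    rw [LinearPMap.add_apply A B ⟨x.1, hdomC.ge x.2⟩, LinearPMap.add_apply A B ⟨y.1, hdomC.ge y.2⟩,
      inner_add_left, inner_add_right]
    show inner 𝕜 (A x) (A y) + inner 𝕜 (A x) (B ⟨y.1, hdom.le y.2⟩)
        = inner 𝕜 (A x) (A y) + inner 𝕜 (B ⟨x.1, hdom.le x.2⟩) (A y)
    rw [hcomm x y]
end

section
/- Let A and B be symmetric linear operators in a real or complex Hilbert space H such that A is essentially selfadjoint, B is A-bounded, and ⟨A x, B y⟩ = ⟨B x, A y⟩ for all x, y ∈ dom A. Then A + B (with domain dom A) and the restriction of B to dom A are both essentially selfadjoint. -/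
open LinearPMap

section Helpers

variable {𝕜 H : Type*} [RCLike 𝕜] [NormedAddCommGroup H] [InnerProductSpace 𝕜 H]

local notation "⟪" x ", " y "⟫" => @inner 𝕜 _ _ x y

/-- Test against a dense set. -/
theorem aux_inner_zero_of_dense {D : Set H} (hD : Dense D) {w : H}
    (hw : ∀ x ∈ D, ⟪w, x⟫ = 0) : w = 0 := by
  have hcl : closure D ⊆ {x : H | ⟪w, x⟫ = 0} := by
    apply closure_minimal hw
    exact isClosed_eq (Continuous.inner continuous_const continuous_id) continuous_const
  have : ⟪w, w⟫ = 0 := hcl (hD w)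
  simpa using this

/-- Symmetry-type bilinear identities pass to closures of graphs. -/
theorem aux_symm_ext {s : Set (H × H)}
    (hsymm : ∀ p ∈ s, ∀ q ∈ s, ⟪p.2, q.1⟫ = ⟪p.1, q.2⟫) :
    ∀ p ∈ closure s, ∀ q ∈ closure s, ⟪p.2, q.1⟫ = ⟪p.1, q.2⟫ := by
  have hc : (closure s) ×ˢ (closure s) ⊆
      {r : (H × H) × (H × H) | ⟪r.1.2, r.2.1⟫ = ⟪r.1.1, r.2.2⟫} := by
    rw [← closure_prod_eq]
    apply closure_minimal
    · rintro ⟨p, q⟩ ⟨hp, hq⟩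
      exact hsymm p hp q hq
    · apply isClosed_eq
      · exact Continuous.inner (continuous_snd.comp continuous_fst)
          (continuous_fst.comp continuous_snd)
      · exact Continuous.inner (continuous_fst.comp continuous_fst)
          (continuous_snd.comp continuous_snd)
  intro p hp q hq
  exact hc (Set.mk_mem_prod hp hq)

/-- A densely defined symmetric operator is closable. -/
theorem aux_closable {S : H →ₗ.[𝕜] H} (hd : Dense (S.domain : Set H))
    (hs : S.IsSymmetricOp) : S.IsClosable := by
  have hg : ∀ (x : H × H), x ∈ S.graph.topologicalClosure → x.fst = 0 → x.snd = 0 := by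
    rintro ⟨a, c⟩ hx (rfl : a = 0)
    have hmem : ((0 : H), c) ∈ closure (S.graph : Set (H × H)) := by
      rwa [← Submodule.topologicalClosure_coe]
    refine aux_inner_zero_of_dense (𝕜 := 𝕜) hd ?_
    intro z hz
    have hzero : closure (S.graph : Set (H × H)) ⊆
        {p : H × H | ⟪p.2, z⟫ - ⟪p.1, S ⟨z, hz⟩⟫ = 0} := by
      apply closure_minimal
      · intro p hp
        rcases S.mem_graph_iff.mp hp with ⟨x, hx1, hx2⟩
        have h2 := hs x ⟨z, hz⟩
        simp only [Set.mem_setOf_eq, ← hx2, ← hx1, sub_eq_zero]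
        exact h2
      · exact isClosed_eq (Continuous.sub
          (Continuous.inner continuous_snd continuous_const)
          (Continuous.inner continuous_fst continuous_const)) continuous_const
    have := hzero hmem
    simp only [Set.mem_setOf_eq, inner_zero_left, sub_zero] at this
    exact this
  exact ⟨S.graph.topologicalClosure.toLinearPMap,
    (Submodule.toLinearPMap_graph_eq _ hg).symm⟩


/-- Von Neumann surjectivity: if `G` is the graph of a selfadjoint operator, then
`1 + t^2 A^2` is surjective. -/
theorem aux_surj [CompleteSpace H] {G : Submodule 𝕜 (H × H)}
    (hGclosed : IsClosed (G : Set (H × H)))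
    (hadj : ∀ a b : H, (∀ x y : H, (x, y) ∈ G → ⟪x, a⟫ + ⟪y, b⟫ = 0) → (b, -a) ∈ G)
    {t : ℝ} (ht : 0 < t) (f : H) :
    ∃ y z w : H, (y, z) ∈ G ∧ (z, w) ∈ G ∧ y + ((t : 𝕜) ^ 2) • w = f := by
  classical
  set V := WithLp 2 (H × H) with hV
  let e := WithLp.equiv 2 (H × H)
  have htk : (t : 𝕜) ≠ 0 := by
    simp only [ne_eq, RCLike.ofReal_eq_zero]
    exact ht.ne'
  let K : Submodule 𝕜 V :=
    { carrier := {p : V | (p.fst, (t : 𝕜)⁻¹ • p.snd) ∈ G}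
      add_mem' := by
        intro p q hp hq
        have : ((p + q).fst, (t : 𝕜)⁻¹ • (p + q).snd)
            = (p.fst, (t : 𝕜)⁻¹ • p.snd) + (q.fst, (t : 𝕜)⁻¹ • q.snd) := by
          simp [Prod.ext_iff, Prod.mk_add_mk, smul_add, show (p + q).snd = p.snd + q.snd from rfl,
            show (p + q).fst = p.fst + q.fst from rfl]
        simpa [Set.mem_setOf_eq, this] using G.add_mem hp hq
      zero_mem' := by
        have : (((0 : V).fst, (t : 𝕜)⁻¹ • (0 : V).snd) : H × H) = (0, 0) :=
          Prod.ext rfl (by rw [show (0 : V).snd = (0 : H) from rfl, smul_zero])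
        show ((0 : V).fst, (t : 𝕜)⁻¹ • (0 : V).snd) ∈ G
        rw [this]
        exact G.zero_mem
      smul_mem' := by
        intro c p hp
        have : ((c • p).fst, (t : 𝕜)⁻¹ • (c • p).snd)
            = c • (p.fst, (t : 𝕜)⁻¹ • p.snd) := by
          rw [Prod.smul_mk]
          exact Prod.ext rfl (by rw [show (c • p).snd = c • p.snd from rfl, smul_comm])
        simpa [Set.mem_setOf_eq, this] using G.smul_mem c hp }
  have hKclosed : IsClosed (K : Set V) := by
    have : (K : Set V) = (fun p : V => (p.fst, (t : 𝕜)⁻¹ • p.snd)) ⁻¹' (G : Set (H × H)) := rfl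
    rw [this]
    apply hGclosed.preimage
    have hcont : Continuous (fun p : V => (p.fst, p.snd)) := by
      have := (WithLp.prodContinuousLinearEquiv 2 𝕜 H H).continuous
      exact this
    exact (continuous_fst.comp hcont).prodMk
      ((continuous_const_smul _).comp (continuous_snd.comp hcont))
  haveI : CompleteSpace K := hKclosed.completeSpace_coe
  obtain ⟨p, hp, q, hq, hv⟩ := K.exists_add_mem_mem_orthogonal (e.symm (f, 0))
  rw [Submodule.mem_orthogonal] at hq
  have hfst : f = p.fst + q.fst := by
    have h1 := congrArg (fun r : V => r.fst) hv
    rw [show (e.symm (f, 0)).fst = f from rfl, WithLp.add_fst] at h1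
    exact h1
  have hsnd : (0 : H) = p.snd + q.snd := by
    have h1 := congrArg (fun r : V => r.snd) hv
    rw [show (e.symm (f, 0)).snd = 0 from rfl, WithLp.add_snd] at h1
    exact h1
  have hortho : ∀ x' y' : H, (x', y') ∈ G → ⟪x', q.fst⟫ + ⟪y', (t : 𝕜) • q.snd⟫ = 0 := by
    intro x' y' hxy
    have hrK : e.symm (x', (t : 𝕜) • y') ∈ K := by
      show ((e.symm (x', (t : 𝕜) • y')).fst, (t : 𝕜)⁻¹ • (e.symm (x', (t : 𝕜) • y')).snd) ∈ G
      rw [show (e.symm (x', (t : 𝕜) • y')).fst = x' from rfl,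
        show (e.symm (x', (t : 𝕜) • y')).snd = (t : 𝕜) • y' from rfl, smul_smul, inv_mul_cancel₀ htk, one_smul]
      exact hxy
    have h0 := hq _ hrK
    change ⟪x', q.fst⟫ + ⟪(t : 𝕜) • y', q.snd⟫ = 0 at h0
    rw [← h0]
    congr 1
    rw [inner_smul_left, inner_smul_right, RCLike.conj_ofReal]
  have hbG : ((t : 𝕜) • q.snd, -q.fst) ∈ G := hadj _ _ hortho
  have hqsnd : q.snd = -p.snd := eq_neg_of_add_eq_zero_right hsnd.symm
  have hG2 : ((t : 𝕜) • p.snd, q.fst) ∈ G := by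
    have := G.neg_mem hbG
    rw [Prod.neg_mk, hqsnd, smul_neg, neg_neg, neg_neg] at this
    exact this
  have hG3 : ((t : 𝕜)⁻¹ • p.snd, ((t : 𝕜) ^ 2)⁻¹ • q.fst) ∈ G := by
    have := G.smul_mem (((t : 𝕜) ^ 2)⁻¹) hG2
    rw [Prod.smul_mk, smul_smul] at this
    have harith : ((t : 𝕜) ^ 2)⁻¹ * (t : 𝕜) = (t : 𝕜)⁻¹ := by
      field_simp
    rwa [harith] at this
  refine ⟨p.fst, (t : 𝕜)⁻¹ • p.snd, ((t : 𝕜) ^ 2)⁻¹ • q.fst, hp, hG3, ?_⟩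
  rw [smul_smul, mul_inv_cancel₀ (pow_ne_zero 2 htk), one_smul]
  exact hfst.symm


set_option maxHeartbeats 2000000 in
theorem aux_main [CompleteSpace H] {G GC : Submodule 𝕜 (H × H)}
    (hGclosed : IsClosed (G : Set (H × H)))
    (hGdense : Dense ((G.map (LinearMap.fst 𝕜 H H) : Submodule 𝕜 H) : Set H))
    (hG0 : ∀ c : H, ((0 : H), c) ∈ G → c = 0)
    (hGsymm : ∀ x y x' y' : H, (x, y) ∈ G → (x', y') ∈ G → ⟪y, x'⟫ = ⟪x, y'⟫)
    (hadj : ∀ a b : H, (∀ x y : H, (x, y) ∈ G → ⟪x, a⟫ + ⟪y, b⟫ = 0) → (b, -a) ∈ G)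
    (hCsymm : ∀ x c x' c' : H, (x, c) ∈ GC → (x', c') ∈ GC → ⟪c, x'⟫ = ⟪x, c'⟫)
    (hsubC : ∀ x y : H, (x, y) ∈ G → ∃ c, (x, c) ∈ GC)
    (hcomm : ∀ x y c x' y' c' : H, (x, y) ∈ G → (x, c) ∈ GC → (x', y') ∈ G → (x', c') ∈ GC →
      ⟪y, c'⟫ = ⟪c, y'⟫)
    (ε δ : ℝ) (u v : H)
    (hu : ∀ x y c : H, (x, y) ∈ G → (x, c) ∈ GC → ⟪v, x⟫ = ⟪u, (ε : 𝕜) • y + (δ : 𝕜) • c⟫) :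
    (u, v) ∈ closure {p : H × H | ∃ x y c : H, (x, y) ∈ G ∧ (x, c) ∈ GC ∧
      p = (x, (ε : 𝕜) • y + (δ : 𝕜) • c)} := by
  classical
  -- the scales
  set τ : ℕ → ℝ := fun n => 1 / (n + 1) with hτ
  have hτpos : ∀ n, 0 < τ n := fun n => by positivity
  set σ : ℕ → 𝕜 := fun n => ((τ n ^ 2 : ℝ) : 𝕜) with hσ
  have hσ0 : ∀ n, σ n ≠ 0 := fun n => by
    simp only [hσ, ne_eq, RCLike.ofReal_eq_zero]
    positivity
  -- the regularizing family
  have hWex : ∀ (n : ℕ) (f : H), ∃ y z w : H, (y, z) ∈ G ∧ (z, w) ∈ G ∧ y + σ n • w = f := by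
    intro n f
    obtain ⟨y, z, w, h1, h2, h3⟩ := aux_surj hGclosed hadj (hτpos n) f
    refine ⟨y, z, w, h1, h2, ?_⟩
    rw [← h3, hσ]
    norm_cast
  choose Wy Wz Ww hW1 hW2 hW3 using hWex
  -- uniqueness
  have huniq : ∀ (n : ℕ) (f y z w : H), (y, z) ∈ G → (z, w) ∈ G → y + σ n • w = f →
      y = Wy n f ∧ z = Wz n f ∧ w = Ww n f := by
    intro n f y z w h1 h2 h3
    set Y := y - Wy n f with hY
    set Z := z - Wz n f with hZ
    set W := w - Ww n f with hW
    have hYG : (Y, Z) ∈ G := G.sub_mem h1 (hW1 n f)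
    have hZG : (Z, W) ∈ G := G.sub_mem h2 (hW2 n f)
    have hsum : Y + σ n • W = 0 := by
      have heq : Y + σ n • W = (y + σ n • w) - (Wy n f + σ n • Ww n f) := by
        rw [hY, hW, smul_sub]
        abel
      rw [heq, h3, hW3 n f, sub_self]
    have hinner : (0 : 𝕜) = ⟪Y, Y⟫ + σ n * ⟪Z, Z⟫ := by
      have h4 : ⟪Y + σ n • W, Y⟫ = 0 := by rw [hsum, inner_zero_left]
      rw [inner_add_left, inner_smul_left, hσ, RCLike.conj_ofReal] at h4
      have h5 : ⟪W, Y⟫ = ⟪Z, Z⟫ := hGsymm Z W Y Z hZG hYG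
      rw [h5] at h4
      rw [← h4, hσ]
    rw [inner_self_eq_norm_sq_to_K, inner_self_eq_norm_sq_to_K, hσ] at hinner
    have hreal : (0 : ℝ) = ‖Y‖ ^ 2 + τ n ^ 2 * ‖Z‖ ^ 2 := by
      have h6 : ((0 : ℝ) : 𝕜) = ((‖Y‖ ^ 2 + τ n ^ 2 * ‖Z‖ ^ 2 : ℝ) : 𝕜) := by
        push_cast
        simpa using hinner
      exact_mod_cast h6
    have hY0 : Y = 0 := by
      have h7 : ‖Y‖ ^ 2 = 0 := by
        nlinarith [mul_nonneg (sq_nonneg (τ n)) (sq_nonneg ‖Z‖), sq_nonneg ‖Y‖]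
      exact norm_eq_zero.mp (sq_eq_zero_iff.mp h7)
    have hZ0 : Z = 0 := by
      have hτ2 : (0 : ℝ) < τ n ^ 2 := by positivity
      have h7 : ‖Z‖ ^ 2 = 0 := by nlinarith [sq_nonneg ‖Y‖, sq_nonneg ‖Z‖]
      exact norm_eq_zero.mp (sq_eq_zero_iff.mp h7)
    have hW0 : W = 0 := by
      have : σ n • W = 0 := by rwa [hY0, zero_add] at hsum
      rcases smul_eq_zero.mp this with h | h
      · exact absurd h (hσ0 n)
      · exact h
    exact ⟨sub_eq_zero.mp hY0, sub_eq_zero.mp hZ0, sub_eq_zero.mp hW0⟩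
  -- additivity
  have hWadd : ∀ (n : ℕ) (f g : H), Wy n f + Wy n g = Wy n (f + g) ∧
      Wz n f + Wz n g = Wz n (f + g) ∧ Ww n f + Ww n g = Ww n (f + g) := by
    intro n f g
    refine huniq n (f + g) _ _ _ ?_ ?_ ?_
    · have := G.add_mem (hW1 n f) (hW1 n g)
      rwa [Prod.mk_add_mk] at this
    · have := G.add_mem (hW2 n f) (hW2 n g)
      rwa [Prod.mk_add_mk] at this
    · have heq : Wy n f + Wy n g + σ n • (Ww n f + Ww n g)
          = (Wy n f + σ n • Ww n f) + (Wy n g + σ n • Ww n g) := by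
        rw [smul_add]
        abel
      rw [heq, hW3, hW3]
  -- homogeneity
  have hWsmul : ∀ (n : ℕ) (k : 𝕜) (f : H), k • Wy n f = Wy n (k • f) ∧
      k • Wz n f = Wz n (k • f) ∧ k • Ww n f = Ww n (k • f) := by
    intro n k f
    refine huniq n (k • f) _ _ _ ?_ ?_ ?_
    · have := G.smul_mem k (hW1 n f)
      rwa [Prod.smul_mk] at this
    · have := G.smul_mem k (hW2 n f)
      rwa [Prod.smul_mk] at this
    · rw [smul_comm (σ n) k, ← smul_add, hW3]
  -- norm bound
  have hWnorm : ∀ (n : ℕ) (f : H), ‖Wy n f‖ ≤ ‖f‖ := by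
    intro n f
    have h8 : ⟪f, Wy n f⟫ = ((‖Wy n f‖ ^ 2 + τ n ^ 2 * ‖Wz n f‖ ^ 2 : ℝ) : 𝕜) := by
      calc ⟪f, Wy n f⟫ = ⟪Wy n f + σ n • Ww n f, Wy n f⟫ := by rw [hW3 n f]
        _ = ((‖Wy n f‖ ^ 2 + τ n ^ 2 * ‖Wz n f‖ ^ 2 : ℝ) : 𝕜) := by
            rw [inner_add_left, inner_smul_left, hσ, RCLike.conj_ofReal,
              hGsymm _ _ _ _ (hW2 n f) (hW1 n f), inner_self_eq_norm_sq_to_K,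
              inner_self_eq_norm_sq_to_K]
            push_cast
            ring
    have h9 : ‖Wy n f‖ ^ 2 + τ n ^ 2 * ‖Wz n f‖ ^ 2 ≤ ‖f‖ * ‖Wy n f‖ := by
      calc ‖Wy n f‖ ^ 2 + τ n ^ 2 * ‖Wz n f‖ ^ 2 = RCLike.re ⟪f, Wy n f⟫ := by
            rw [h8, RCLike.ofReal_re]
        _ ≤ ‖⟪f, Wy n f⟫‖ := RCLike.re_le_norm _
        _ ≤ ‖f‖ * ‖Wy n f‖ := norm_inner_le_norm _ _
    nlinarith [mul_nonneg (sq_nonneg (τ n)) (sq_nonneg ‖Wz n f‖), norm_nonneg (Wy n f),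
      norm_nonneg f]
  -- symmetry of the regularizer
  have hWsym : ∀ (n : ℕ) (f g : H), ⟪Wy n f, g⟫ = ⟪f, Wy n g⟫ := by
    intro n f g
    have h1 : ⟪Wy n f, Ww n g⟫ = ⟪Wz n f, Wz n g⟫ :=
      (hGsymm _ _ _ _ (hW1 n f) (hW2 n g)).symm
    have h2 : ⟪Ww n f, Wy n g⟫ = ⟪Wz n f, Wz n g⟫ :=
      hGsymm _ _ _ _ (hW2 n f) (hW1 n g)
    calc ⟪Wy n f, g⟫ = ⟪Wy n f, Wy n g + σ n • Ww n g⟫ := by rw [hW3 n g]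
      _ = ⟪Wy n f, Wy n g⟫ + σ n * ⟪Wy n f, Ww n g⟫ := by
          rw [inner_add_right, inner_smul_right]
      _ = ⟪Wy n f, Wy n g⟫ + σ n * ⟪Ww n f, Wy n g⟫ := by rw [h1, h2]
      _ = ⟪Wy n f + σ n • Ww n f, Wy n g⟫ := by
          rw [inner_add_left, inner_smul_left, hσ, RCLike.conj_ofReal]
      _ = ⟪f, Wy n g⟫ := by rw [hW3 n f]
  -- the regularizer commutes with the operator `A`
  have hWA : ∀ (n : ℕ) (x z : H), (x, z) ∈ G → Wy n z = Wz n x := by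
    intro n x z hxz
    have hw : (Ww n x, (σ n)⁻¹ • (z - Wz n x)) ∈ G := by
      have h1 : (x - Wy n x, z - Wz n x) ∈ G := by
        have := G.sub_mem hxz (hW1 n x)
        rwa [Prod.mk_sub_mk] at this
      have h2 := G.smul_mem (σ n)⁻¹ h1
      rw [Prod.smul_mk] at h2
      have h3 : (σ n)⁻¹ • (x - Wy n x) = Ww n x := by
        have h4 : x - Wy n x = σ n • Ww n x := sub_eq_of_eq_add' (hW3 n x).symm
        rw [h4, smul_smul, inv_mul_cancel₀ (hσ0 n), one_smul]
      rwa [h3] at h2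
    have hsum : Wz n x + σ n • ((σ n)⁻¹ • (z - Wz n x)) = z := by
      rw [smul_smul, mul_inv_cancel₀ (hσ0 n), one_smul]
      abel
    exact ((huniq n z _ _ _ (hW2 n x) hw hsum).1).symm
  -- the regularizer commutes with the operator `C`
  have hWC : ∀ (n : ℕ) (x z c : H), (x, z) ∈ G → (x, c) ∈ GC → (Wy n x, Wy n c) ∈ GC := by
    intro n x z c hxz hxc
    obtain ⟨ct, hct⟩ := hsubC _ _ (hW1 n x)
    suffices heq : Wy n c = ct by rw [heq]; exact hct
    apply ext_inner_left 𝕜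
    intro f
    obtain ⟨cyf, hcyf⟩ := hsubC _ _ (hW1 n f)
    obtain ⟨czf, hczf⟩ := hsubC _ _ (hW2 n f)
    obtain ⟨czt, hczt⟩ := hsubC _ _ (hW2 n x)
    have e1 : ⟪f, Wy n c⟫ = ⟪Wy n f, c⟫ := (hWsym n f c).symm
    have e2 : ⟪Ww n f, ct⟫ = ⟪czf, Wz n x⟫ :=
      hcomm _ _ _ _ _ _ (hW2 n f) hczf (hW1 n x) hct
    have e3 : ⟪czf, Wz n x⟫ = ⟪Wz n f, czt⟫ := hCsymm _ _ _ _ hczf hczt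
    have e4 : ⟪Wz n f, czt⟫ = ⟪cyf, Ww n x⟫ :=
      hcomm _ _ _ _ _ _ (hW1 n f) hcyf (hW2 n x) hczt
    have e5 : ⟪cyf, x⟫ = ⟪Wy n f, c⟫ := hCsymm _ _ _ _ hcyf hxc
    have e6 : ⟪cyf, Wy n x⟫ = ⟪Wy n f, ct⟫ := hCsymm _ _ _ _ hcyf hct
    have e7 : σ n • Ww n x = x - Wy n x :=
      ((sub_eq_of_eq_add' (hW3 n x).symm)).symm
    calc ⟪f, Wy n c⟫ = ⟪Wy n f, c⟫ := e1
      _ = ⟪cyf, x⟫ := e5.symm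
      _ = ⟪cyf, Wy n x⟫ + ⟪cyf, x - Wy n x⟫ := by
          rw [← inner_add_right]
          congr 1
          abel
      _ = ⟪Wy n f, ct⟫ + ⟪cyf, σ n • Ww n x⟫ := by rw [e6, e7]
      _ = ⟪Wy n f, ct⟫ + σ n * ⟪cyf, Ww n x⟫ := by rw [inner_smul_right]
      _ = ⟪Wy n f, ct⟫ + σ n * ⟪Ww n f, ct⟫ := by rw [← e4, ← e3, ← e2]
      _ = ⟪Wy n f + σ n • Ww n f, ct⟫ := by
          rw [inner_add_left, inner_smul_left, hσ, RCLike.conj_ofReal]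
      _ = ⟪f, ct⟫ := by rw [hW3 n f]
  -- the key identity: the regularizer intertwines the adjoint relation
  have hmain : ∀ n : ℕ, ∃ c' : H, (Wy n u, c') ∈ GC ∧
      (ε : 𝕜) • Wz n u + (δ : 𝕜) • c' = Wy n v := by
    intro n
    obtain ⟨c', hc'⟩ := hsubC _ _ (hW1 n u)
    refine ⟨c', hc', ?_⟩
    have h0 : ((ε : 𝕜) • Wz n u + (δ : 𝕜) • c') - Wy n v = 0 := by
      apply aux_inner_zero_of_dense (𝕜 := 𝕜) hGdense
      rintro x' hx'
      obtain ⟨pq, hpq, rfl⟩ := Submodule.mem_map.mp hx'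
      simp only [LinearMap.fst_apply]
      obtain ⟨z', hz'G⟩ : ∃ z', (pq.1, z') ∈ G := ⟨pq.2, hpq⟩
      obtain ⟨cx, hcx⟩ := hsubC _ _ hz'G
      set x' := pq.1
      rw [inner_sub_left]
      have hRHS : ⟪Wy n v, x'⟫ = ⟪u, (ε : 𝕜) • Wz n x' + (δ : 𝕜) • Wy n cx⟫ := by
        rw [hWsym n v x']
        exact hu (Wy n x') (Wz n x') (Wy n cx) (hW1 n x') (hWC n x' z' cx hz'G hcx)
      have hLHS : ⟪(ε : 𝕜) • Wz n u + (δ : 𝕜) • c', x'⟫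
          = ⟪u, (ε : 𝕜) • Wz n x' + (δ : 𝕜) • Wy n cx⟫ := by
        rw [inner_add_left, inner_smul_left, inner_smul_left, RCLike.conj_ofReal,
          RCLike.conj_ofReal, hGsymm _ _ _ _ (hW1 n u) hz'G, hCsymm _ _ _ _ hc' hcx]
        have hlin : Wy n ((ε : 𝕜) • z' + (δ : 𝕜) • cx)
            = (ε : 𝕜) • Wz n x' + (δ : 𝕜) • Wy n cx := by
          rw [← (hWadd n _ _).1, ← (hWsmul n (ε : 𝕜) z').1, ← (hWsmul n (δ : 𝕜) cx).1,
            hWA n x' z' hz'G]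
        calc (ε : 𝕜) * ⟪Wy n u, z'⟫ + (δ : 𝕜) * ⟪Wy n u, cx⟫
            = ⟪Wy n u, (ε : 𝕜) • z' + (δ : 𝕜) • cx⟫ := by
              rw [inner_add_right, inner_smul_right, inner_smul_right]
          _ = ⟪u, Wy n ((ε : 𝕜) • z' + (δ : 𝕜) • cx)⟫ := hWsym n u _
          _ = ⟪u, (ε : 𝕜) • Wz n x' + (δ : 𝕜) • Wy n cx⟫ := by rw [hlin]
      rw [hLHS, hRHS, sub_self]
    exact sub_eq_zero.mp h0
  -- convergence of the regularizer
  have hWy0 : ∀ n : ℕ, Wy n 0 = 0 ∧ Wz n 0 = 0 ∧ Ww n 0 = 0 := by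
    intro n
    have := huniq n 0 0 0 0 G.zero_mem G.zero_mem (by rw [smul_zero, add_zero])
    exact ⟨this.1.symm, this.2.1.symm, this.2.2.symm⟩
  have hdenseR : Dense (Set.range (Wy 0)) := by
    let M : Submodule 𝕜 H :=
      { carrier := Set.range (Wy 0)
        add_mem' := by
          rintro a b ⟨f, rfl⟩ ⟨g, rfl⟩
          exact ⟨f + g, ((hWadd 0 f g).1).symm⟩
        zero_mem' := ⟨0, (hWy0 0).1⟩
        smul_mem' := by
          rintro k a ⟨f, rfl⟩
          exact ⟨k • f, ((hWsmul 0 k f).1).symm⟩ }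
    have hM : Mᗮ = ⊥ := by
      rw [Submodule.eq_bot_iff]
      intro p hp
      rw [Submodule.mem_orthogonal] at hp
      have h1 : ⟪Wy 0 p, p⟫ = 0 := hp _ ⟨p, rfl⟩
      have h2 : ⟪Wy 0 p, p⟫ = ((‖Wy 0 p‖ ^ 2 + τ 0 ^ 2 * ‖Wz 0 p‖ ^ 2 : ℝ) : 𝕜) := by
        calc ⟪Wy 0 p, p⟫ = ⟪Wy 0 p, Wy 0 p + σ 0 • Ww 0 p⟫ := by rw [hW3 0 p]
          _ = ((‖Wy 0 p‖ ^ 2 + τ 0 ^ 2 * ‖Wz 0 p‖ ^ 2 : ℝ) : 𝕜) := by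
              rw [inner_add_right, inner_smul_right,
                ← hGsymm _ _ _ _ (hW1 0 p) (hW2 0 p), inner_self_eq_norm_sq_to_K,
                inner_self_eq_norm_sq_to_K, hσ]
              push_cast
              ring_nf
      rw [h2] at h1
      have h3 : ‖Wy 0 p‖ ^ 2 + τ 0 ^ 2 * ‖Wz 0 p‖ ^ 2 = 0 := by exact_mod_cast h1
      have hWyp : Wy 0 p = 0 := by
        have h4 : ‖Wy 0 p‖ ^ 2 = 0 := by
          nlinarith [mul_nonneg (sq_nonneg (τ 0)) (sq_nonneg ‖Wz 0 p‖), sq_nonneg ‖Wy 0 p‖]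
        exact norm_eq_zero.mp (sq_eq_zero_iff.mp h4)
      have hWzp : Wz 0 p = 0 := by
        have hτ2 : (0 : ℝ) < τ 0 ^ 2 := by positivity
        have h4 : ‖Wz 0 p‖ ^ 2 = 0 := by nlinarith [sq_nonneg ‖Wy 0 p‖, sq_nonneg ‖Wz 0 p‖]
        exact norm_eq_zero.mp (sq_eq_zero_iff.mp h4)
      have hWwp : Ww 0 p = 0 := by
        apply hG0
        have := hW2 0 p
        rwa [hWzp] at this
      have : p = Wy 0 p + σ 0 • Ww 0 p := (hW3 0 p).symm
      rw [hWyp, hWwp, smul_zero, add_zero] at this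
      exact this
    have : M.topologicalClosure = ⊤ := Submodule.topologicalClosure_eq_top_iff.mpr hM
    have hd := Submodule.dense_iff_topologicalClosure_eq_top.mpr this
    exact hd
  have hconv : ∀ h : H, ∀ η : ℝ, 0 < η → ∃ N : ℕ, ∀ n ≥ N, ‖Wy n h - h‖ < η := by
    intro h η hη
    obtain ⟨m, ⟨f, rfl⟩, hm⟩ := Metric.mem_closure_iff.mp (hdenseR h) (η / 3) (by positivity)
    set m := Wy 0 f
    have hwm : ∀ n : ℕ, Wy n m - m = - Wy n (σ n • Ww 0 f) := by
      intro n
      have hid : Wy n (m + σ n • Ww 0 f) = m :=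
        ((huniq n (m + σ n • Ww 0 f) m (Wz 0 f) (Ww 0 f) (hW1 0 f) (hW2 0 f) rfl).1).symm
      have h9 : Wy n m + Wy n (σ n • Ww 0 f) = m := (hWadd n m (σ n • Ww 0 f)).1.trans hid
      calc Wy n m - m = Wy n m - (Wy n m + Wy n (σ n • Ww 0 f)) := by rw [h9]
        _ = - Wy n (σ n • Ww 0 f) := by abel
    obtain ⟨N, hN⟩ := exists_nat_one_div_lt
      (show (0 : ℝ) < η / 3 / (‖Ww 0 f‖ + 1) by positivity)
    refine ⟨N, fun n hn => ?_⟩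
    have hτn : τ n ≤ 1 / (N + 1 : ℝ) := by
      rw [hτ]
      apply div_le_div_of_nonneg_left (by norm_num) (by positivity)
      linarith [(Nat.cast_le (α := ℝ)).mpr hn]
    have hτ1 : τ n ≤ 1 := by
      rw [hτ]
      rw [div_le_one (by positivity)]
      linarith [Nat.cast_nonneg (α := ℝ) n]
    have hsmall : τ n ^ 2 * ‖Ww 0 f‖ < η / 3 := by
      have h5 : τ n ^ 2 ≤ τ n := by nlinarith [(hτpos n).le]
      have h6 : τ n < η / 3 / (‖Ww 0 f‖ + 1) := lt_of_le_of_lt hτn hN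
      have h7 : (0 : ℝ) ≤ ‖Ww 0 f‖ := norm_nonneg _
      calc τ n ^ 2 * ‖Ww 0 f‖ ≤ τ n * ‖Ww 0 f‖ := by nlinarith
        _ ≤ τ n * (‖Ww 0 f‖ + 1) := by nlinarith [(hτpos n).le]
        _ < η / 3 / (‖Ww 0 f‖ + 1) * (‖Ww 0 f‖ + 1) := by
            apply mul_lt_mul_of_pos_right h6 (by positivity)
        _ = η / 3 := by field_simp
    have hb1 : ‖Wy n (h - m)‖ ≤ ‖h - m‖ := hWnorm n (h - m)
    have hb2 : ‖Wy n m - m‖ ≤ τ n ^ 2 * ‖Ww 0 f‖ := by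
      rw [hwm n, norm_neg, ← (hWsmul n (σ n) (Ww 0 f)).1, norm_smul, hσ]
      have : ‖((τ n ^ 2 : ℝ) : 𝕜)‖ = τ n ^ 2 := by
        rw [RCLike.norm_ofReal, abs_of_nonneg (by positivity)]
      rw [this]
      exact mul_le_mul_of_nonneg_left (hWnorm n (Ww 0 f)) (by positivity)
    have hdm : ‖h - m‖ < η / 3 := by
      rw [← dist_eq_norm]
      exact hm
    have hsplit : Wy n h - h = Wy n (h - m) + (Wy n m - m) + (m - h) := by
      have h10 : Wy n (h - m) + Wy n m = Wy n h := by
        rw [(hWadd n (h - m) m).1, show h - m + m = h from by abel]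
      rw [← h10]
      abel
    calc ‖Wy n h - h‖ ≤ ‖Wy n (h - m) + (Wy n m - m)‖ + ‖m - h‖ := by
          rw [hsplit]
          exact norm_add_le _ _
      _ ≤ ‖Wy n (h - m)‖ + ‖Wy n m - m‖ + ‖m - h‖ := by
          linarith [norm_add_le (Wy n (h - m)) (Wy n m - m)]
      _ < η / 3 + η / 3 + η / 3 := by
          have : ‖m - h‖ < η / 3 := by rwa [norm_sub_rev]
          have hc1 : ‖Wy n (h - m)‖ < η / 3 := lt_of_le_of_lt hb1 hdm
          have hc2 : ‖Wy n m - m‖ < η / 3 := lt_of_le_of_lt hb2 hsmall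
          linarith
      _ = η := by ring
  -- conclusion
  rw [Metric.mem_closure_iff]
  intro η hη
  obtain ⟨N₁, hN₁⟩ := hconv u η hη
  obtain ⟨N₂, hN₂⟩ := hconv v η hη
  set n := max N₁ N₂
  obtain ⟨c', hc', heq⟩ := hmain n
  refine ⟨(Wy n u, Wy n v), ⟨Wy n u, Wz n u, c', hW1 n u, hc', by rw [heq]⟩, ?_⟩
  rw [Prod.dist_eq]
  apply max_lt
  · rw [dist_eq_norm, norm_sub_rev]
    exact hN₁ n (le_max_left _ _)
  · rw [dist_eq_norm, norm_sub_rev]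
    exact hN₂ n (le_max_right _ _)



end Helpers

/-- **Theorem.** Let `A, B` be symmetric operators in a Hilbert space `H` such that `A` is
essentially selfadjoint, `B` is `A`-bounded, and `⟪A x, B y⟫ = ⟪B x, A y⟫` for all
`x, y ∈ dom A`. Then `A + B` (with domain `dom A`) and the restriction of `B` to `dom A`
are both essentially selfadjoint. -/
theorem essentially_selfadjoint_of_comm' {𝕜 H : Type*} [RCLike 𝕜]
    [NormedAddCommGroup H] [InnerProductSpace 𝕜 H] [CompleteSpace H]
    (A B : H →ₗ.[𝕜] H) (hA : A.IsEssSelfAdjointOp)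
    (hAsymm : A.IsSymmetricOp) (hBsymm : B.IsSymmetricOp)
    (hsub : A.domain ≤ B.domain)
    (hbdd : ∃ α β : ℝ, 0 ≤ α ∧ 0 ≤ β ∧ ∀ x : A.domain,
      ‖B ⟨x.1, hsub x.2⟩‖ ^ 2 ≤ α * ‖A x‖ ^ 2 + β * ‖(x : H)‖ ^ 2)
    (hcomm : ∀ x y : A.domain,
      inner (𝕜 := 𝕜) (A x) (B ⟨y.1, hsub y.2⟩) =
        inner (𝕜 := 𝕜) (B ⟨x.1, hsub x.2⟩) (A y)) :
    (A + B).IsEssSelfAdjointOp ∧ (B.domRestrict A.domain).IsEssSelfAdjointOp := by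
  classical
  obtain ⟨hcl, hAbdense, hAbadj⟩ := hA
  obtain ⟨α, β, hα, hβ, hbound⟩ := hbdd
  set Ab := A.closure with hAbdef
  set G := Ab.graph with hGdef
  have hGset : (G : Set (H × H)) = closure (A.graph : Set (H × H)) := by
    rw [hGdef, hAbdef, ← hcl.graph_closure_eq_closure_graph, Submodule.topologicalClosure_coe]
  have hGclosed : IsClosed (G : Set (H × H)) := hcl.closure_isClosed
  have hG0 : ∀ c : H, ((0 : H), c) ∈ G → c = 0 := fun c h => Ab.graph_fst_eq_zero_snd h rfl
  have hGdense : Dense ((G.map (LinearMap.fst 𝕜 H H) : Submodule 𝕜 H) : Set H) := by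
    rw [hGdef, Ab.graph_map_fst_eq_domain]
    exact hAbdense
  have hAgraphsymm : ∀ p ∈ (A.graph : Set (H × H)), ∀ q ∈ (A.graph : Set (H × H)),
      inner (𝕜 := 𝕜) p.2 q.1 = inner (𝕜 := 𝕜) p.1 q.2 := by
    rintro p hp q hq
    rcases A.mem_graph_iff.mp hp with ⟨x, hx1, hx2⟩
    rcases A.mem_graph_iff.mp hq with ⟨y, hy1, hy2⟩
    rw [← hx2, ← hy2, ← hx1, ← hy1]
    exact hAsymm x y
  have hGsymm : ∀ x y x' y' : H, (x, y) ∈ G → (x', y') ∈ G →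
      inner (𝕜 := 𝕜) y x' = inner (𝕜 := 𝕜) x y' := by
    intro x y x' y' h h'
    have h1 : (x, y) ∈ closure (A.graph : Set (H × H)) := by rw [← hGset]; exact h
    have h2 : (x', y') ∈ closure (A.graph : Set (H × H)) := by rw [← hGset]; exact h'
    exact aux_symm_ext hAgraphsymm (x, y) h1 (x', y') h2
  have hadj : ∀ a b : H, (∀ x y : H, (x, y) ∈ G →
      inner (𝕜 := 𝕜) x a + inner (𝕜 := 𝕜) y b = 0) → (b, -a) ∈ G := by
    intro a b hab
    have hchar : ∀ x : Ab.domain, inner (𝕜 := 𝕜) (-a) (x : H) = inner (𝕜 := 𝕜) b (Ab x) := by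
      intro x
      have h1 := hab (x : H) (Ab x) (Ab.mem_graph x)
      have h2 := congrArg (starRingEnd 𝕜) h1
      simp only [_root_.map_add, inner_conj_symm, _root_.map_zero] at h2
      rw [inner_neg_left]
      exact (eq_neg_of_add_eq_zero_right h2).symm
    have hmem : b ∈ Ab.adjoint.domain :=
      mem_adjoint_domain_of_exists _ ⟨-a, hchar⟩
    have hval : Ab.adjoint ⟨b, hmem⟩ = -a :=
      adjoint_apply_eq hAbdense ⟨b, hmem⟩ hchar
    have hg : (b, -a) ∈ Ab.adjoint.graph := by
      rw [← hval]
      exact Ab.adjoint.mem_graph ⟨b, hmem⟩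
    rwa [hAbadj] at hg
  -- the restricted operator B'
  set B' := B.domRestrict A.domain with hB'def
  have hB'dom : B'.domain = A.domain := by
    rw [hB'def, B.domRestrict_domain, inf_eq_left.mpr hsub]
  have hAdomdense : Dense (A.domain : Set H) := by
    have h1 : (Ab.domain : Set H) ⊆ closure (A.domain : Set H) := by
      intro x hx
      have hxg : (x, Ab ⟨x, hx⟩) ∈ (G : Set (H × H)) := Ab.mem_graph ⟨x, hx⟩
      rw [hGset] at hxg
      have h2 : x ∈ Prod.fst '' closure (A.graph : Set (H × H)) := ⟨_, hxg, rfl⟩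
      have h3 := image_closure_subset_closure_image (f := Prod.fst) continuous_fst h2
      have h4 : Prod.fst '' (A.graph : Set (H × H)) = (A.domain : Set H) := by
        rw [← A.graph_map_fst_eq_domain, Submodule.map_coe]
        rfl
      rwa [h4] at h3
    have h5 : closure (Ab.domain : Set H) ⊆ closure (A.domain : Set H) :=
      closure_minimal h1 isClosed_closure
    rw [dense_iff_closure_eq]
    apply Set.eq_univ_of_univ_subset
    rw [← hAbdense.closure_eq]
    exact h5
  have hB'dense : Dense (B'.domain : Set H) := by
    rw [hB'dom]
    exact hAdomdense
  have hB'symm : B'.IsSymmetricOp := by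
    intro x y
    have hx : (x : H) ∈ A.domain := by rw [← hB'dom]; exact x.2
    have hy : (y : H) ∈ A.domain := by rw [← hB'dom]; exact y.2
    have hbx : B' x = B ⟨(x : H), hsub hx⟩ := domRestrict_apply rfl
    have hby : B' y = B ⟨(y : H), hsub hy⟩ := domRestrict_apply rfl
    rw [hbx, hby]
    exact hBsymm ⟨(x : H), hsub hx⟩ ⟨(y : H), hsub hy⟩
  have hclB' : B'.IsClosable := aux_closable hB'dense hB'symm
  set C := B'.closure with hCdef
  set GC := C.graph with hGCdef
  have hGCset : (GC : Set (H × H)) = closure (B'.graph : Set (H × H)) := by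
    rw [hGCdef, hCdef, ← hclB'.graph_closure_eq_closure_graph, Submodule.topologicalClosure_coe]
  have hGCclosed : IsClosed (GC : Set (H × H)) := hclB'.closure_isClosed
  have hB'graphsymm : ∀ p ∈ (B'.graph : Set (H × H)), ∀ q ∈ (B'.graph : Set (H × H)),
      inner (𝕜 := 𝕜) p.2 q.1 = inner (𝕜 := 𝕜) p.1 q.2 := by
    rintro p hp q hq
    rcases B'.mem_graph_iff.mp hp with ⟨x, hx1, hx2⟩
    rcases B'.mem_graph_iff.mp hq with ⟨y, hy1, hy2⟩
    rw [← hx2, ← hy2, ← hx1, ← hy1]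
    exact hB'symm x y
  have hCsymm : ∀ x c x' c' : H, (x, c) ∈ GC → (x', c') ∈ GC →
      inner (𝕜 := 𝕜) c x' = inner (𝕜 := 𝕜) x c' := by
    intro x c x' c' h h'
    have h1 : (x, c) ∈ closure (B'.graph : Set (H × H)) := by rw [← hGCset]; exact h
    have h2 : (x', c') ∈ closure (B'.graph : Set (H × H)) := by rw [← hGCset]; exact h'
    exact aux_symm_ext hB'graphsymm (x, c) h1 (x', c') h2
  -- the joint approximation
  set Jset : Set (H × H × H) :=
    Set.range (fun u : A.domain => ((u : H), A u, B ⟨u.1, hsub u.2⟩)) with hJdef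
  have hjoint : ∀ x y : H, (x, y) ∈ G → ∃ c : H, (x, c) ∈ GC ∧ (x, y, c) ∈ closure Jset := by
    intro x y hxy
    have hxy' : (x, y) ∈ closure (A.graph : Set (H × H)) := by rw [← hGset]; exact hxy
    obtain ⟨p, hp, hplim⟩ := mem_closure_iff_seq_limit.mp hxy'
    choose u hu1 hu2 using fun n => A.mem_graph_iff.mp (hp n)
    have hxlim : Filter.Tendsto (fun n => ((u n : H))) Filter.atTop (nhds x) := by
      have := (continuous_fst.tendsto (x, y)).comp hplim
      simp only [Function.comp_def] at this ⊢
      convert this using 2 with n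
      exact (hu1 n)
    have hAlim : Filter.Tendsto (fun n => A (u n)) Filter.atTop (nhds y) := by
      have := (continuous_snd.tendsto (x, y)).comp hplim
      simp only [Function.comp_def] at this ⊢
      convert this using 2 with n
      exact (hu2 n)
    -- the sequence B (u n) is Cauchy
    set sα := Real.sqrt α with hsα
    set sβ := Real.sqrt β with hsβ
    have hBdiff : ∀ m n : ℕ, ‖B ⟨(u m : H), hsub (u m).2⟩ - B ⟨(u n : H), hsub (u n).2⟩‖ ≤
        sα * ‖A (u m) - A (u n)‖ + sβ * ‖(u m : H) - (u n : H)‖ := by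
      intro m n
      have h1 := hbound (u m - u n)
      have h2 : B ⟨((u m - u n : A.domain) : H), hsub (u m - u n).2⟩
          = B ⟨(u m : H), hsub (u m).2⟩ - B ⟨(u n : H), hsub (u n).2⟩ := by
        have h3 : (⟨((u m - u n : A.domain) : H), hsub (u m - u n).2⟩ : B.domain)
            = ⟨(u m : H), hsub (u m).2⟩ - ⟨(u n : H), hsub (u n).2⟩ := by
          apply Subtype.ext
          rfl
        rw [h3, B.map_sub]
      have h4 : A (u m - u n) = A (u m) - A (u n) := A.map_sub _ _
      rw [h2, h4] at h1
      have h5 : ((u m - u n : A.domain) : H) = (u m : H) - (u n : H) := rfl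
      rw [h5] at h1
      set dB := ‖B ⟨(u m : H), hsub (u m).2⟩ - B ⟨(u n : H), hsub (u n).2⟩‖
      set dA := ‖A (u m) - A (u n)‖
      set dx := ‖(u m : H) - (u n : H)‖
      have hsq : dB ^ 2 ≤ (sα * dA + sβ * dx) ^ 2 := by
        have e1 : sα ^ 2 = α := Real.sq_sqrt hα
        have e2 : sβ ^ 2 = β := Real.sq_sqrt hβ
        have e3 : 0 ≤ sα * dA := mul_nonneg (Real.sqrt_nonneg _) (norm_nonneg _)
        have e4 : 0 ≤ sβ * dx := mul_nonneg (Real.sqrt_nonneg _) (norm_nonneg _)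
        nlinarith [h1, mul_nonneg e3 e4]
      have h6 : 0 ≤ sα * dA + sβ * dx := by positivity
      nlinarith [norm_nonneg (B ⟨(u m : H), hsub (u m).2⟩ - B ⟨(u n : H), hsub (u n).2⟩), hsq, h6]
    have hBcauchy : CauchySeq (fun n => B ⟨(u n : H), hsub (u n).2⟩) := by
      rw [Metric.cauchySeq_iff]
      intro ε hε
      have hAc : CauchySeq (fun n => A (u n)) := hAlim.cauchySeq
      have hxc : CauchySeq (fun n => ((u n : H))) := hxlim.cauchySeq
      rw [Metric.cauchySeq_iff] at hAc hxc
      set ε' := ε / (sα + sβ + 1) with hε'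
      have hε'pos : 0 < ε' := by
        apply div_pos hε
        have := Real.sqrt_nonneg α
        have := Real.sqrt_nonneg β
        linarith
      obtain ⟨N₁, hN₁⟩ := hAc ε' hε'pos
      obtain ⟨N₂, hN₂⟩ := hxc ε' hε'pos
      refine ⟨max N₁ N₂, fun m hm n hn => ?_⟩
      have d1 := hN₁ m (le_trans (le_max_left _ _) hm) n (le_trans (le_max_left _ _) hn)
      have d2 := hN₂ m (le_trans (le_max_right _ _) hm) n (le_trans (le_max_right _ _) hn)
      rw [dist_eq_norm] at d1 d2 ⊢
      have hle := hBdiff m n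
      have hsαn : 0 ≤ sα := Real.sqrt_nonneg _
      have hsβn : 0 ≤ sβ := Real.sqrt_nonneg _
      calc ‖B ⟨(u m : H), hsub (u m).2⟩ - B ⟨(u n : H), hsub (u n).2⟩‖
          ≤ sα * ‖A (u m) - A (u n)‖ + sβ * ‖(u m : H) - (u n : H)‖ := hle
        _ ≤ sα * ε' + sβ * ε' := by
            have := mul_le_mul_of_nonneg_left d1.le hsαn
            have := mul_le_mul_of_nonneg_left d2.le hsβn
            nlinarith
        _ < ε := by
            rw [hε']
            rw [show sα * (ε / (sα + sβ + 1)) + sβ * (ε / (sα + sβ + 1))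
              = (sα + sβ) * (ε / (sα + sβ + 1)) from by ring]
            have h7 : (sα + sβ) / (sα + sβ + 1) < 1 := by
              rw [div_lt_one (by linarith)]
              linarith
            calc (sα + sβ) * (ε / (sα + sβ + 1)) = ε * ((sα + sβ) / (sα + sβ + 1)) := by ring
              _ < ε * 1 := by exact mul_lt_mul_of_pos_left h7 hε
              _ = ε := mul_one ε
    obtain ⟨c, hc⟩ := cauchySeq_tendsto_of_complete hBcauchy
    refine ⟨c, ?_, ?_⟩
    · rw [← SetLike.mem_coe, hGCset]
      apply mem_closure_iff_seq_limit.mpr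
      refine ⟨fun n => ((u n : H), B ⟨(u n : H), hsub (u n).2⟩), fun n => ?_, ?_⟩
      · have hmem : (u n : H) ∈ B'.domain := by rw [hB'dom]; exact (u n).2
        have happ : B' ⟨(u n : H), hmem⟩ = B ⟨(u n : H), hsub (u n).2⟩ :=
          domRestrict_apply rfl
        have := B'.mem_graph ⟨(u n : H), hmem⟩
        rwa [happ] at this
      · exact hxlim.prodMk_nhds hc
    · apply mem_closure_iff_seq_limit.mpr
      refine ⟨fun n => ((u n : H), A (u n), B ⟨(u n : H), hsub (u n).2⟩),
        fun n => ⟨u n, rfl⟩, ?_⟩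
      exact hxlim.prodMk_nhds (hAlim.prodMk_nhds hc)
  have hGCuniq : ∀ x c c' : H, (x, c) ∈ GC → (x, c') ∈ GC → c = c' := by
    intro x c c' h h'
    exact C.mem_graph_snd_inj h h' rfl
  have hsubC : ∀ x y : H, (x, y) ∈ G → ∃ c, (x, c) ∈ GC :=
    fun x y h => (hjoint x y h).imp fun c hc => hc.1
  -- commutation at the closure level
  have hJcomm : ∀ p ∈ Jset, ∀ q ∈ Jset,
      inner (𝕜 := 𝕜) p.2.1 q.2.2 = inner (𝕜 := 𝕜) p.2.2 q.2.1 := by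
    rintro _ ⟨x₀, rfl⟩ _ ⟨y₀, rfl⟩
    exact hcomm x₀ y₀
  have hJcl : ∀ p ∈ closure Jset, ∀ q ∈ closure Jset,
      inner (𝕜 := 𝕜) p.2.1 q.2.2 = inner (𝕜 := 𝕜) p.2.2 q.2.1 := by
    have hc : (closure Jset) ×ˢ (closure Jset) ⊆
        {r : (H × H × H) × (H × H × H) |
          inner (𝕜 := 𝕜) r.1.2.1 r.2.2.2 = inner (𝕜 := 𝕜) r.1.2.2 r.2.2.1} := by
      rw [← closure_prod_eq]
      apply closure_minimal
      · rintro ⟨p, q⟩ ⟨hp, hq⟩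
        exact hJcomm p hp q hq
      · apply isClosed_eq
        · exact Continuous.inner
            ((continuous_fst.comp continuous_snd).comp continuous_fst)
            ((continuous_snd.comp continuous_snd).comp continuous_snd)
        · exact Continuous.inner
            ((continuous_snd.comp continuous_snd).comp continuous_fst)
            ((continuous_fst.comp continuous_snd).comp continuous_snd)
    intro p hp q hq
    exact hc (Set.mk_mem_prod hp hq)
  have hcommG : ∀ x y c x' y' c' : H, (x, y) ∈ G → (x, c) ∈ GC → (x', y') ∈ G →
      (x', c') ∈ GC → inner (𝕜 := 𝕜) y c' = inner (𝕜 := 𝕜) c y' := by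
    intro x y c x' y' c' h1 h2 h3 h4
    obtain ⟨c₀, hc₀GC, hc₀J⟩ := hjoint x y h1
    obtain ⟨c₁, hc₁GC, hc₁J⟩ := hjoint x' y' h3
    rw [hGCuniq x c c₀ h2 hc₀GC, hGCuniq x' c' c₁ h4 hc₁GC]
    exact hJcl _ hc₀J _ hc₁J
  -- the sum operator
  set S1 := A + B with hS1def
  have hS1dom : S1.domain = A.domain := by
    rw [hS1def, A.add_domain B, inf_eq_left.mpr hsub]
  have hS1symm : S1.IsSymmetricOp := by
    intro x y
    rw [A.add_apply B x, A.add_apply B y, inner_add_left, inner_add_right]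
    rw [hAsymm ⟨(x : H), x.prop.1⟩ ⟨(y : H), y.prop.1⟩,
      hBsymm ⟨(x : H), x.prop.2⟩ ⟨(y : H), y.prop.2⟩]
  have hS1dense : Dense (S1.domain : Set H) := by
    rw [hS1dom]
    exact hAdomdense
  have hclS1 : S1.IsClosable := aux_closable hS1dense hS1symm
  set T := S1.closure with hTdef
  set GT := T.graph with hGTdef
  have hGTset : (GT : Set (H × H)) = closure (S1.graph : Set (H × H)) := by
    rw [hGTdef, hTdef, ← hclS1.graph_closure_eq_closure_graph, Submodule.topologicalClosure_coe]
  have hGTclosed : IsClosed (GT : Set (H × H)) := hclS1.closure_isClosed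
  have hTdense : Dense (T.domain : Set H) :=
    hS1dense.mono (fun _ hx => (S1.le_closure).1 hx)
  have hGTsub : ∀ x y c : H, (x, y) ∈ G → (x, c) ∈ GC → (x, y + c) ∈ GT := by
    intro x y c hxy hxc
    obtain ⟨c₀, hc₀GC, hc₀J⟩ := hjoint x y hxy
    rw [hGCuniq x c c₀ hxc hc₀GC]
    have hmJ : (fun p : H × H × H => (p.1, p.2.1 + p.2.2)) '' Jset ⊆
        (S1.graph : Set (H × H)) := by
      rintro _ ⟨_, ⟨u₀, rfl⟩, rfl⟩
      have hmem : (u₀ : H) ∈ S1.domain := by rw [hS1dom]; exact u₀.2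
      have happ : S1 ⟨(u₀ : H), hmem⟩ = A u₀ + B ⟨(u₀ : H), hsub u₀.2⟩ := by
        rw [A.add_apply B ⟨(u₀ : H), hmem⟩]
      have := S1.mem_graph ⟨(u₀ : H), hmem⟩
      rwa [happ] at this
    have hcont : Continuous (fun p : H × H × H => (p.1, p.2.1 + p.2.2)) :=
      continuous_fst.prodMk ((continuous_fst.comp continuous_snd).add
        (continuous_snd.comp continuous_snd))
    have h1 : (x, y + c₀) ∈ (fun p : H × H × H => (p.1, p.2.1 + p.2.2)) '' closure Jset :=
      ⟨(x, y, c₀), hc₀J, rfl⟩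
    have h2 := image_closure_subset_closure_image hcont h1
    have h3 := closure_mono hmJ h2
    rw [← hGTset] at h3
    exact h3
  have hS1graphsymm : ∀ p ∈ (S1.graph : Set (H × H)), ∀ q ∈ (S1.graph : Set (H × H)),
      inner (𝕜 := 𝕜) p.2 q.1 = inner (𝕜 := 𝕜) p.1 q.2 := by
    rintro p hp q hq
    rcases S1.mem_graph_iff.mp hp with ⟨x, hx1, hx2⟩
    rcases S1.mem_graph_iff.mp hq with ⟨y, hy1, hy2⟩
    rw [← hx2, ← hy2, ← hx1, ← hy1]
    exact hS1symm x y
  have hTsymm : T.IsSymmetricOp := by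
    intro x y
    have h1 : ((x : H), T x) ∈ closure (S1.graph : Set (H × H)) := by
      rw [← hGTset]; exact T.mem_graph x
    have h2 : ((y : H), T y) ∈ closure (S1.graph : Set (H × H)) := by
      rw [← hGTset]; exact T.mem_graph y
    exact aux_symm_ext hS1graphsymm _ h1 _ h2
  have hCgraphsymmOp : C.IsSymmetricOp := by
    intro x y
    have h1 : ((x : H), C x) ∈ closure (B'.graph : Set (H × H)) := by
      rw [← hGCset]; exact C.mem_graph x
    have h2 : ((y : H), C y) ∈ closure (B'.graph : Set (H × H)) := by
      rw [← hGCset]; exact C.mem_graph y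
    exact aux_symm_ext hB'graphsymm _ h1 _ h2
  have hCdense : Dense (C.domain : Set H) :=
    hB'dense.mono (fun _ hx => (B'.le_closure).1 hx)
  -- essential selfadjointness of A + B
  have hTadj : T.adjoint = T := by
    apply le_antisymm
    · apply le_of_le_graph
      intro pq hpq
      obtain ⟨ua, ha1, ha2⟩ := T.adjoint.mem_graph_iff.mp hpq
      have hform := adjoint_isFormalAdjoint (T := T) hTdense
      have hu : ∀ x y c : H, (x, y) ∈ G → (x, c) ∈ GC →
          inner (𝕜 := 𝕜) (T.adjoint ua) x
            = inner (𝕜 := 𝕜) (ua : H) (((1 : ℝ) : 𝕜) • y + ((1 : ℝ) : 𝕜) • c) := by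
        intro x y c hxy hxc
        obtain ⟨w, hw1, hw2⟩ := T.mem_graph_iff.mp (hGTsub x y c hxy hxc)
        have hw1' : (w : H) = x := hw1
        have hw2' : T w = y + c := hw2
        have h5 := hform ua w
        rw [hw1', hw2'] at h5
        rw [h5]
        simp
      have hmem2 := aux_main hGclosed hGdense hG0 hGsymm hadj hCsymm hsubC hcommG 1 1
        ((ua : H)) (T.adjoint ua) hu
      have hSsub : {p : H × H | ∃ x y c : H, (x, y) ∈ G ∧ (x, c) ∈ GC ∧
          p = (x, ((1 : ℝ) : 𝕜) • y + ((1 : ℝ) : 𝕜) • c)} ⊆ (GT : Set (H × H)) := by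
        rintro p ⟨x, y, c, h1, h2, rfl⟩
        have := hGTsub x y c h1 h2
        simpa using this
      have h3 := (closure_minimal hSsub hGTclosed) hmem2
      have hpq2 : pq = ((ua : H), T.adjoint ua) := Prod.ext ha1.symm ha2.symm
      rw [hpq2]
      exact h3
    · exact IsFormalAdjoint.le_adjoint hTdense hTsymm
  -- essential selfadjointness of B'
  have hCadj : C.adjoint = C := by
    apply le_antisymm
    · apply le_of_le_graph
      intro pq hpq
      obtain ⟨ua, ha1, ha2⟩ := C.adjoint.mem_graph_iff.mp hpq
      have hform := adjoint_isFormalAdjoint (T := C) hCdense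
      have hu : ∀ x y c : H, (x, y) ∈ G → (x, c) ∈ GC →
          inner (𝕜 := 𝕜) (C.adjoint ua) x
            = inner (𝕜 := 𝕜) (ua : H) (((0 : ℝ) : 𝕜) • y + ((1 : ℝ) : 𝕜) • c) := by
        intro x y c hxy hxc
        obtain ⟨w, hw1, hw2⟩ := C.mem_graph_iff.mp hxc
        have hw1' : (w : H) = x := hw1
        have hw2' : C w = c := hw2
        have h5 := hform ua w
        rw [hw1', hw2'] at h5
        rw [h5]
        simp
      have hmem2 := aux_main hGclosed hGdense hG0 hGsymm hadj hCsymm hsubC hcommG 0 1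
        ((ua : H)) (C.adjoint ua) hu
      have hSsub : {p : H × H | ∃ x y c : H, (x, y) ∈ G ∧ (x, c) ∈ GC ∧
          p = (x, ((0 : ℝ) : 𝕜) • y + ((1 : ℝ) : 𝕜) • c)} ⊆ (GC : Set (H × H)) := by
        rintro p ⟨x, y, c, h1, h2, rfl⟩
        simpa using h2
      have h3 := (closure_minimal hSsub hGCclosed) hmem2
      have hpq2 : pq = ((ua : H), C.adjoint ua) := Prod.ext ha1.symm ha2.symm
      rw [hpq2]
      exact h3
    · exact IsFormalAdjoint.le_adjoint hCdense hCgraphsymmOp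
  exact ⟨⟨hclS1, hTdense, hTadj⟩, ⟨hclB', hCdense, hCadj⟩⟩
end

section
/- Let A be a symmetric linear operator in a real or complex Hilbert space H and let n be a positive integer. Then Aⁿ is Aⁿ⁺¹-bounded: there exist constants α, β ≥ 0 such that ‖Aⁿ x‖² ≤ α‖Aⁿ⁺¹ x‖² + β‖x‖² for all x ∈ dom(Aⁿ⁺¹). -/
open LinearPMap

/-- The product (composition) `A ∘ B` of two partially defined linear operators,
with domain `{x ∈ dom B : B x ∈ dom A}`, defined via its graph. -/
noncomputable def LinearPMap.pcomp {R E F G : Type*} [Ring R] [AddCommGroup E] [Module R E]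
    [AddCommGroup F] [Module R F] [AddCommGroup G] [Module R G]
    (A : F →ₗ.[R] G) (B : E →ₗ.[R] F) : E →ₗ.[R] G :=
  Submodule.toLinearPMap
    { carrier := {p : E × G | ∃ y : F, (p.1, y) ∈ B.graph ∧ (y, p.2) ∈ A.graph}
      add_mem' := fun ⟨y, hy1, hy2⟩ ⟨z, hz1, hz2⟩ =>
        ⟨y + z, B.graph.add_mem hy1 hz1, A.graph.add_mem hy2 hz2⟩
      zero_mem' := ⟨0, B.graph.zero_mem, A.graph.zero_mem⟩
      smul_mem' := fun c _ ⟨y, hy1, hy2⟩ =>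
        ⟨c • y, B.graph.smul_mem c hy1, A.graph.smul_mem c hy2⟩ }

/-- The `n`-th power of a partially defined linear operator, with its natural domain:
`A⁰ = I` on all of `E` and `dom Aⁿ⁺¹ = {x ∈ dom Aⁿ : Aⁿ x ∈ dom A}`. -/
noncomputable def LinearPMap.ppow {R E : Type*} [Ring R] [AddCommGroup E] [Module R E]
    (A : E →ₗ.[R] E) : ℕ → E →ₗ.[R] E
  | 0 => (LinearMap.id : E →ₗ[R] E).toPMap ⊤
  | n + 1 => A.pcomp (A.ppow n)

namespace LinearPMap

variable {R E F G : Type*} [Ring R] [AddCommGroup E] [Module R E]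
    [AddCommGroup F] [Module R F] [AddCommGroup G] [Module R G]

theorem pcomp_graph (A : F →ₗ.[R] G) (B : E →ₗ.[R] F) {x : E} {z : G} :
    (x, z) ∈ (A.pcomp B).graph ↔ ∃ y, (x, y) ∈ B.graph ∧ (y, z) ∈ A.graph := by
  rw [pcomp, Submodule.toLinearPMap_graph_eq]
  · exact Iff.rfl
  · rintro ⟨u, w⟩ ⟨y, h1, h2⟩ hu
    simp only at hu
    subst hu
    have hy : y = 0 := B.graph_fst_eq_zero_snd h1 rfl
    subst hy
    exact A.graph_fst_eq_zero_snd h2 rfl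

theorem pcomp_domain_mem {A : F →ₗ.[R] G} {B : E →ₗ.[R] F} {x : E}
    (hx : x ∈ (A.pcomp B).domain) : x ∈ B.domain := by
  rw [mem_domain_iff] at hx
  obtain ⟨z, hz⟩ := hx
  obtain ⟨y, h1, _⟩ := (pcomp_graph A B).mp hz
  exact mem_domain_of_mem_graph h1

theorem pcomp_domain_mem' {A : F →ₗ.[R] G} {B : E →ₗ.[R] F} {x : E}
    (hx : x ∈ (A.pcomp B).domain) : B ⟨x, pcomp_domain_mem hx⟩ ∈ A.domain := by
  rw [mem_domain_iff] at hx
  obtain ⟨z, hz⟩ := hx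
  obtain ⟨y, h1, h2⟩ := (pcomp_graph A B).mp hz
  have : B ⟨x, pcomp_domain_mem hx⟩ = y := by
    rcases (mem_graph_iff B).mp h1 with ⟨u, hu1, hu2⟩
    have : (⟨x, pcomp_domain_mem hx⟩ : B.domain) = u := Subtype.ext hu1.symm
    rw [this, hu2]
  rw [this]
  exact mem_domain_of_mem_graph h2

theorem pcomp_apply {A : F →ₗ.[R] G} {B : E →ₗ.[R] F} {x : E}
    (hx : x ∈ (A.pcomp B).domain) :
    (A.pcomp B) ⟨x, hx⟩ = A ⟨B ⟨x, pcomp_domain_mem hx⟩, pcomp_domain_mem' hx⟩ := by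
  have h1 : (x, (A.pcomp B) ⟨x, hx⟩) ∈ (A.pcomp B).graph := mem_graph _ ⟨x, hx⟩
  have h2 : (x, A ⟨B ⟨x, pcomp_domain_mem hx⟩, pcomp_domain_mem' hx⟩) ∈ (A.pcomp B).graph :=
    (pcomp_graph A B).mpr ⟨B ⟨x, pcomp_domain_mem hx⟩, mem_graph B ⟨x, pcomp_domain_mem hx⟩,
      mem_graph A ⟨B ⟨x, pcomp_domain_mem hx⟩, pcomp_domain_mem' hx⟩⟩
  exact (A.pcomp B).mem_graph_snd_inj h1 h2 rfl

theorem ppow_succ {E : Type*} [AddCommGroup E] [Module R E] (A : E →ₗ.[R] E) (n : ℕ) :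
    A.ppow (n + 1) = A.pcomp (A.ppow n) := rfl

theorem ppow_domain_antitone {E : Type*} [AddCommGroup E] [Module R E] (A : E →ₗ.[R] E)
    {k m : ℕ} (h : k ≤ m) : (A.ppow m).domain ≤ (A.ppow k).domain := by
  induction m, h using Nat.le_induction with
  | base => exact le_refl _
  | succ m hm ih =>
    intro x hx
    exact ih (by rw [ppow_succ] at hx; exact pcomp_domain_mem hx)

end LinearPMap

/-- discrete convexity argument -/
theorem seq_bound (n : ℕ) (d : ℕ → ℝ) (h0 : ∀ k, 0 ≤ d k)
    (hconv : ∀ k, 1 ≤ k → k + 1 ≤ n + 1 → 2 * d k ≤ d (k - 1) + d (k + 1)) :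
    d n ≤ d 0 + d (n + 1) := by
  set e : ℕ → ℝ := fun k => d (k + 1) - d k with he
  have hstep : ∀ k, k + 2 ≤ n + 1 → e k ≤ e (k + 1) := by
    intro k hk
    have := hconv (k + 1) (by omega) (by omega)
    simp only [Nat.add_sub_cancel] at this
    simp only [he]
    linarith
  have hmono : ∀ j m, j ≤ m → m + 1 ≤ n + 1 → e j ≤ e m := by
    intro j m hjm
    induction m, hjm using Nat.le_induction with
    | base => intro _; exact le_refl _
    | succ m hm ih =>
      intro hN
      exact le_trans (ih (by omega)) (hstep m (by omega))
  by_cases hen : 0 ≤ e n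
  · have : d n ≤ d (n + 1) := by simp only [he] at hen; linarith
    linarith [h0 0]
  · push_neg at hen
    have hle : ∀ k, k ≤ n → d k ≤ d 0 := by
      intro k hk
      induction k with
      | zero => exact le_refl _
      | succ k ih =>
        have hek : e k ≤ e n := hmono k n (by omega) (le_refl _)
        have : d (k + 1) = d k + e k := by simp [he]
        have := ih (by omega)
        have hen' : d (n + 1) - d n < 0 := hen
        simp only [he] at hek
        linarith
    linarith [hle n (le_refl n), h0 (n + 1)]
section Key

variable {𝕜 H : Type*} [RCLike 𝕜] [NormedAddCommGroup H] [InnerProductSpace 𝕜 H]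

theorem key_ineq (A : H →ₗ.[𝕜] H) (hsymm : A.IsSymmetricOp) (m : ℕ)
    {x : H} (hx : x ∈ (A.ppow (m + 2)).domain) (h1 : x ∈ (A.ppow (m + 1)).domain)
    (h0 : x ∈ (A.ppow m).domain) :
    ‖(A.ppow (m + 1)) ⟨x, h1⟩‖ ^ 2 ≤ ‖(A.ppow m) ⟨x, h0⟩‖ * ‖(A.ppow (m + 2)) ⟨x, hx⟩‖ := by
  have h1' : x ∈ (A.pcomp (A.ppow m)).domain := h1
  have hx' : x ∈ (A.pcomp (A.ppow (m + 1))).domain := hx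
  have hA1 : (A.ppow m) ⟨x, pcomp_domain_mem h1'⟩ ∈ A.domain := pcomp_domain_mem' h1'
  have hA2 : (A.ppow (m + 1)) ⟨x, pcomp_domain_mem hx'⟩ ∈ A.domain := pcomp_domain_mem' hx'
  let u : A.domain := ⟨(A.ppow m) ⟨x, pcomp_domain_mem h1'⟩, hA1⟩
  let w : A.domain := ⟨(A.ppow (m + 1)) ⟨x, pcomp_domain_mem hx'⟩, hA2⟩
  have hAu : A u = (A.ppow (m + 1)) ⟨x, h1⟩ := (pcomp_apply h1').symm
  have hAw : A w = (A.ppow (m + 2)) ⟨x, hx⟩ := (pcomp_apply hx').symm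
  have huH : (u : H) = (A.ppow m) ⟨x, h0⟩ := rfl
  have hwH : (w : H) = (A.ppow (m + 1)) ⟨x, h1⟩ := rfl
  calc ‖(A.ppow (m + 1)) ⟨x, h1⟩‖ ^ 2
      = RCLike.re (inner (𝕜 := 𝕜) ((A.ppow (m + 1)) ⟨x, h1⟩ : H)
          ((A.ppow (m + 1)) ⟨x, h1⟩ : H)) := (inner_self_eq_norm_sq _).symm
    _ = RCLike.re (inner (𝕜 := 𝕜) (A u) (w : H)) := by rw [hAu, hwH]
    _ = RCLike.re (inner (𝕜 := 𝕜) (u : H) (A w)) := by rw [hsymm u w]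
    _ = RCLike.re (inner (𝕜 := 𝕜) ((A.ppow m) ⟨x, h0⟩ : H)
          ((A.ppow (m + 2)) ⟨x, hx⟩ : H)) := by rw [hAw, huH]
    _ ≤ ‖(A.ppow m) ⟨x, h0⟩‖ * ‖(A.ppow (m + 2)) ⟨x, hx⟩‖ := re_inner_le_norm _ _

end Key

/-- **Lemma.** Let `A` be a symmetric operator in a Hilbert space `H` and `n ≥ 1`. Then
`Aⁿ` is `Aⁿ⁺¹`-bounded: `dom Aⁿ⁺¹ ⊆ dom Aⁿ` and there are `α, β ≥ 0` with
`‖Aⁿ x‖² ≤ α‖Aⁿ⁺¹ x‖² + β‖x‖²` for all `x ∈ dom Aⁿ⁺¹`. -/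
theorem pow_bounded_by_pow_succ {𝕜 H : Type*} [RCLike 𝕜]
    [NormedAddCommGroup H] [InnerProductSpace 𝕜 H]
    (A : H →ₗ.[𝕜] H) (hsymm : A.IsSymmetricOp) (n : ℕ) (hn : 1 ≤ n) :
    ∃ hsub : (A.ppow (n + 1)).domain ≤ (A.ppow n).domain,
      ∃ α β : ℝ, 0 ≤ α ∧ 0 ≤ β ∧ ∀ x : (A.ppow (n + 1)).domain,
        ‖(A.ppow n) ⟨x.1, hsub x.2⟩‖ ^ 2 ≤
          α * ‖(A.ppow (n + 1)) x‖ ^ 2 + β * ‖(x : H)‖ ^ 2 := by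
  have hsub : (A.ppow (n + 1)).domain ≤ (A.ppow n).domain :=
    A.ppow_domain_antitone (Nat.le_succ n)
  refine ⟨hsub, 1, 1, zero_le_one, zero_le_one, fun x => ?_⟩
  have hdom : ∀ k, k ≤ n + 1 → x.1 ∈ (A.ppow k).domain :=
    fun k hk => A.ppow_domain_antitone hk x.2
  set d : ℕ → ℝ := fun k =>
    if h : k ≤ n + 1 then ‖(A.ppow k) ⟨x.1, hdom k h⟩‖ ^ 2 else 0 with hd
  have hdval : ∀ k (h : k ≤ n + 1), d k = ‖(A.ppow k) ⟨x.1, hdom k h⟩‖ ^ 2 := by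
    intro k h
    simp only [hd, dif_pos h]
  have h0 : ∀ k, 0 ≤ d k := by
    intro k
    by_cases h : k ≤ n + 1
    · rw [hdval k h]; positivity
    · simp [hd, h]
  have hconv : ∀ k, 1 ≤ k → k + 1 ≤ n + 1 → 2 * d k ≤ d (k - 1) + d (k + 1) := by
    intro k hk1 hk2
    obtain ⟨m, rfl⟩ : ∃ m, k = m + 1 := ⟨k - 1, by omega⟩
    simp only [Nat.add_sub_cancel]
    rw [hdval (m + 1) (by omega), hdval m (by omega), hdval (m + 2) (by omega)]
    have hkey := key_ineq A hsymm m (hdom (m + 2) (by omega)) (hdom (m + 1) (by omega))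
      (hdom m (by omega))
    nlinarith [hkey, sq_nonneg (‖(A.ppow m) ⟨x.1, hdom m (by omega : m ≤ n + 1)⟩‖ -
      ‖(A.ppow (m + 2)) ⟨x.1, hdom (m + 2) (by omega : m + 2 ≤ n + 1)⟩‖),
      norm_nonneg ((A.ppow m) ⟨x.1, hdom m (by omega : m ≤ n + 1)⟩),
      norm_nonneg ((A.ppow (m + 2)) ⟨x.1, hdom (m + 2) (by omega : m + 2 ≤ n + 1)⟩)]
  have hmain := seq_bound n d h0 hconv
  have hd0 : d 0 = ‖(x : H)‖ ^ 2 := hdval 0 (by omega)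
  have hdn : d n = ‖(A.ppow n) ⟨x.1, hsub x.2⟩‖ ^ 2 := hdval n (by omega)
  have hdn1 : d (n + 1) = ‖(A.ppow (n + 1)) x‖ ^ 2 := hdval (n + 1) (le_refl _)
  rw [hdn, hd0, hdn1] at hmain
  linarith
end
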